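/- arXiv:0711.4144 — 8 statements merged into one kernel-verified Lean document; each statement's English description precedes it below -/
import Mathlib

section
/- For every k ≥ 1 and every nonzero complex number q, one has P_{k-1}(q) = q^{2k} · p_{k-1}(q + q^{-1}), where P_{k-1} and p_{k-1} are the polynomials defined in the context. -/
open Polynomial

/-- For `k ≥ 1`, the polynomial `P_{k-1}(q) = 1 + ∑_{l=1}^{k} (q⁴−q³−q²−q)·q^{4(l−1)}`,
here `Pm1 k` denotes `P_{k-1}`. -/
noncomputable def Pm1 (k : ℕ) : Polynomial ℤ :=
  1 + ∑ l ∈ Finset.range k, (X ^ 4 - X ^ 3 - X ^ 2 - X) * X ^ (4 * l)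

/-- The polynomials `p_k` defined by `p₀ = x²−x−3`, `p₁ = (x³−2x²−3x+5)(x+1)`,
`p_k = (x²−2)·p_{k-1} − p_{k-2}`. -/
noncomputable def pp : ℕ → Polynomial ℤ
  | 0 => X ^ 2 - X - 3
  | 1 => (X ^ 3 - 2 * X ^ 2 - 3 * X + 5) * (X + 1)
  | (k + 2) => (X ^ 2 - 2) * pp (k + 1) - pp k

lemma Pm1_succ (k : ℕ) : Pm1 (k + 1) = Pm1 k + (X ^ 4 - X ^ 3 - X ^ 2 - X) * X ^ (4 * k) := by
  simp [Pm1, Finset.sum_range_succ]; ring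

lemma key (q : ℂ) (hq : q ≠ 0) :
    ∀ k, aeval q (Pm1 (k + 1)) = q ^ (2 * (k + 1)) * aeval (q + q⁻¹) (pp k) := by
  intro k
  induction k using Nat.twoStepInduction with
  | zero =>
      simp [Pm1, pp, map_ofNat]
      field_simp
      ring
  | one =>
      have hr : q * q⁻¹ = 1 := mul_inv_cancel₀ hq
      simp only [Pm1, pp, Finset.sum_range_succ, Finset.sum_range_zero, map_add, map_sub,
        map_mul, map_pow, map_one, map_zero, map_ofNat, aeval_X, aeval_one]
      linear_combination (-1 + q - q * q⁻¹ + q ^ 2 + q ^ 2 * q⁻¹ - q ^ 2 * q⁻¹ ^ 2 + q ^ 3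
        + q ^ 3 * q⁻¹ + q ^ 3 * q⁻¹ ^ 2 - q ^ 3 * q⁻¹ ^ 3 + 4 * q ^ 4 + 3 * q ^ 4 * q⁻¹
        - 4 * q ^ 4 * q⁻¹ ^ 2 + 3 * q ^ 5 - 6 * q ^ 5 * q⁻¹ - 4 * q ^ 6) * hr
  | more k ih0 ih1 =>
      have hpp : pp (k + 2) = (X ^ 2 - 2) * pp (k + 1) - pp k := rfl
      rw [Pm1_succ (k + 2), Pm1_succ (k + 1), hpp]
      simp only [map_add, map_sub, map_mul, map_pow, map_one, map_ofNat, aeval_X]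
      have h2 : ((q + q⁻¹) ^ 2 - 2) * q ^ 2 = q ^ 4 + 1 := by
        field_simp; ring
      have hx : q ^ (2 * (k + 2 + 1)) * (((q + q⁻¹) ^ 2 - 2) * aeval (q + q⁻¹) (pp (k + 1))
            - aeval (q + q⁻¹) (pp k))
          = (q ^ 4 + 1) * (q ^ (2 * (k + 1 + 1)) * aeval (q + q⁻¹) (pp (k + 1)))
            - q ^ 4 * (q ^ (2 * (k + 1)) * aeval (q + q⁻¹) (pp k)) := by
        linear_combination q ^ (2 * (k + 1 + 1)) * aeval (q + q⁻¹) (pp (k + 1)) * h2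
      rw [hx, ← ih1, ← ih0, Pm1_succ (k + 1)]
      simp only [map_add, map_sub, map_mul, map_pow, aeval_X]
      ring

/-- For every `k ≥ 1` and nonzero `q : ℂ`,
`P_{k-1}(q) = q^{2k} · p_{k-1}(q + q⁻¹)`. -/
theorem stmt_3 (k : ℕ) (hk : 1 ≤ k) (q : ℂ) (hq : q ≠ 0) :
    Polynomial.aeval q (Pm1 k) =
      q ^ (2 * k) * Polynomial.aeval (q + q⁻¹) (pp (k - 1)) := by
  obtain ⟨n, rfl⟩ : ∃ n, k = n + 1 := ⟨k - 1, (Nat.succ_pred_eq_of_pos hk).symm⟩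
  simpa using key q hq n
end

section
/- For every k ≥ 0, the polynomial P_k has exactly one real root α in the open interval (0,1), and exactly one real root α' in the interval (1, ∞). -/
open Polynomial

namespace Stmt4Aux

/-- The real polynomial function associated to `Pm1 n`. -/
noncomputable def F (n : ℕ) (x : ℝ) : ℝ :=
  1 + ∑ l ∈ Finset.range n, (x ^ 4 - x ^ 3 - x ^ 2 - x) * x ^ (4 * l)

lemma aeval_Pm1 (n : ℕ) (x : ℝ) : aeval x (Pm1 n) = F n x := by
  simp [Pm1, F]

/-- Closed form: `(x⁴−1)·F n x = (x⁴−1) + (x⁴−x³−x²−x)(x^{4n}−1)`. -/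
lemma closed (n : ℕ) (x : ℝ) :
    (x ^ 4 - 1) * F n x =
      (x ^ 4 - 1) + (x ^ 4 - x ^ 3 - x ^ 2 - x) * (x ^ (4 * n) - 1) := by
  induction n with
  | zero => simp [F]
  | succ m ih =>
    have h : F (m + 1) x = F m x + (x ^ 4 - x ^ 3 - x ^ 2 - x) * x ^ (4 * m) := by
      simp [F, Finset.sum_range_succ]; ring
    have hp : x ^ (4 * (m + 1)) = x ^ (4 * m) * x ^ 4 := by
      rw [← pow_add]; ring_nf
    rw [h, hp]
    linear_combination ih

/-- Palindromic symmetry: `F n x = x^{4n} · F n (1/x)` for `x ≠ 0`. -/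
lemma pal (n : ℕ) (x : ℝ) (hx : x ≠ 0) : F n x = x ^ (4 * n) * F n (1 / x) := by
  induction n with
  | zero => simp [F]
  | succ m ih =>
    have hF1 : F (m + 1) x = F m x + (x ^ 4 - x ^ 3 - x ^ 2 - x) * x ^ (4 * m) := by
      simp [F, Finset.sum_range_succ]; ring
    have hF2 : F (m + 1) (1 / x) = F m (1 / x)
        + ((1/x) ^ 4 - (1/x) ^ 3 - (1/x) ^ 2 - (1/x)) * (1/x) ^ (4 * m) := by
      simp [F, Finset.sum_range_succ]; ring
    have hg : x ^ 4 * ((1/x) ^ 4 - (1/x) ^ 3 - (1/x) ^ 2 - (1/x)) = 1 - x - x ^ 2 - x ^ 3 := by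
      field_simp
    have hpm : x ^ (4 * m) * (1/x) ^ (4 * m) = 1 := by
      rw [← mul_pow]; field_simp; simp
    have hexp : x ^ (4 * (m + 1)) = x ^ (4 * m) * x ^ 4 := by rw [← pow_add]; ring_nf
    rw [hF1, hF2, hexp]
    linear_combination (x^4) * ih + (-(x^(4*m) * (1/x)^(4*m))) * hg
      + (-(1 - x - x^2 - x^3)) * hpm + (-1 : ℝ) * (closed m x)

lemma hasDerivAt_F (n : ℕ) (x : ℝ) :
    HasDerivAt (F n)
      (∑ l ∈ Finset.range n,
        ((4 * x ^ 3 - 3 * x ^ 2 - 2 * x - 1) * x ^ (4 * l)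
          + (x ^ 4 - x ^ 3 - x ^ 2 - x) * ((4 * l : ℕ) * x ^ (4 * l - 1)))) x := by
  have hsum : HasDerivAt
      (fun x : ℝ => ∑ l ∈ Finset.range n, (x ^ 4 - x ^ 3 - x ^ 2 - x) * x ^ (4 * l))
      (∑ l ∈ Finset.range n,
        ((4 * x ^ 3 - 3 * x ^ 2 - 2 * x - 1) * x ^ (4 * l)
          + (x ^ 4 - x ^ 3 - x ^ 2 - x) * ((4 * l : ℕ) * x ^ (4 * l - 1)))) x := by
    apply HasDerivAt.fun_sum
    intro l _
    have hg : HasDerivAt (fun x : ℝ => x ^ 4 - x ^ 3 - x ^ 2 - x)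
        (4 * x ^ 3 - 3 * x ^ 2 - 2 * x - 1) x := by
      have h4 := hasDerivAt_pow 4 x
      have h3 := hasDerivAt_pow 3 x
      have h2 := hasDerivAt_pow 2 x
      have h1 := hasDerivAt_id x
      norm_num at h4 h3 h2
      exact ((h4.sub h3).sub h2).sub h1
    exact hg.mul (hasDerivAt_pow (4 * l) x)
  exact hsum.const_add (1:ℝ)

lemma continuous_F (n : ℕ) : Continuous (F n) :=
  continuous_iff_continuousAt.mpr fun x => (hasDerivAt_F n x).continuousAt

lemma deriv_F_neg (n : ℕ) (hn : 1 ≤ n) {x : ℝ} (hx : x ∈ Set.Ioo (0:ℝ) 1) :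
    deriv (F n) x < 0 := by
  rw [(hasDerivAt_F n x).deriv]
  obtain ⟨hx0, hx1⟩ := hx
  apply Finset.sum_neg
  · intro l _
    have hxp : (0:ℝ) < x ^ (4 * l) := pow_pos hx0 _
    have hxp' : (0:ℝ) ≤ x ^ (4 * l - 1) := le_of_lt (pow_pos hx0 _)
    have hA : 4 * x ^ 3 - 3 * x ^ 2 - 2 * x - 1 < 0 := by nlinarith
    have hB : x ^ 4 - x ^ 3 - x ^ 2 - x < 0 := by nlinarith
    have h1 : (4 * x ^ 3 - 3 * x ^ 2 - 2 * x - 1) * x ^ (4 * l) < 0 :=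
      mul_neg_of_neg_of_pos hA hxp
    have h2 : (x ^ 4 - x ^ 3 - x ^ 2 - x) * ((4 * l : ℕ) * x ^ (4 * l - 1)) ≤ 0 := by
      apply mul_nonpos_of_nonpos_of_nonneg (le_of_lt hB)
      positivity
    linarith
  · exact Finset.nonempty_range_iff.mpr (by omega)

lemma strictAntiOn_F (n : ℕ) (hn : 1 ≤ n) : StrictAntiOn (F n) (Set.Icc 0 1) := by
  apply strictAntiOn_of_deriv_neg (convex_Icc 0 1) (continuous_F n).continuousOn
  intro x hx
  rw [interior_Icc] at hx
  exact deriv_F_neg n hn hx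

lemma F_zero (n : ℕ) : F n 0 = 1 := by
  simp [F]

lemma F_one (n : ℕ) : F n 1 = 1 - 2 * n := by
  simp [F]
  ring

end Stmt4Aux

open Stmt4Aux in
/-- For every `k ≥ 0`, `P_k` has exactly one real root in `(0,1)`
and exactly one real root in `(1,∞)`. -/
theorem stmt_4 (k : ℕ) :
    (∃! α : ℝ, α ∈ Set.Ioo (0 : ℝ) 1 ∧ Polynomial.aeval α (Pm1 (k + 1)) = 0) ∧
    (∃! α' : ℝ, α' ∈ Set.Ioi (1 : ℝ) ∧ Polynomial.aeval α' (Pm1 (k + 1)) = 0) := by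
  set n := k + 1 with hn
  have hn1 : 1 ≤ n := Nat.le_add_left 1 k
  have hanti := strictAntiOn_F n hn1
  have hF1neg : F n 1 < 0 := by
    rw [F_one]
    have : (1:ℝ) ≤ (n:ℝ) := by exact_mod_cast hn1
    linarith
  have hF0pos : (0:ℝ) < F n 0 := by rw [F_zero]; norm_num
  -- existence of root in (0,1)
  have hIVT : (0:ℝ) ∈ F n '' Set.Ioo 0 1 := by
    apply intermediate_value_Ioo' (by norm_num : (0:ℝ) ≤ 1) (continuous_F n).continuousOn
    exact ⟨hF1neg, hF0pos⟩
  obtain ⟨α, hαmem, hαroot⟩ := hIVT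
  have huniq : ∀ y ∈ Set.Ioo (0:ℝ) 1, F n y = 0 → y = α := by
    intro y hy hyr
    exact hanti.injOn (Set.Ioo_subset_Icc_self hy) (Set.Ioo_subset_Icc_self hαmem)
      (by rw [hyr, hαroot])
  have hα0 : (0:ℝ) < α := hαmem.1
  have hα1 : α < 1 := hαmem.2
  have hαne : α ≠ 0 := ne_of_gt hα0
  constructor
  · refine ⟨α, ⟨hαmem, by rw [aeval_Pm1]; exact hαroot⟩, ?_⟩
    intro y ⟨hy, hyr⟩
    rw [aeval_Pm1] at hyr
    exact huniq y hy hyr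
  · -- the root in (1,∞) is 1/α
    have hinv_mem : 1 / α ∈ Set.Ioi (1:ℝ) := by
      rw [Set.mem_Ioi]
      rw [lt_div_iff₀ hα0]
      linarith
    have hinvne : (1:ℝ)/α ≠ 0 := by positivity
    have hroot' : F n (1 / α) = 0 := by
      have := pal n (1/α) hinvne
      rw [one_div_one_div] at this
      rw [this, hαroot, mul_zero]
    refine ⟨1/α, ⟨hinv_mem, by rw [aeval_Pm1]; exact hroot'⟩, ?_⟩
    intro y ⟨hy, hyr⟩
    rw [aeval_Pm1] at hyr
    rw [Set.mem_Ioi] at hy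
    have hy0 : (0:ℝ) < y := lt_trans one_pos hy
    have hyne : y ≠ 0 := ne_of_gt hy0
    have hpal := pal n y hyne
    rw [hyr] at hpal
    have hinvroot : F n (1 / y) = 0 := by
      have hpow : y ^ (4*n) ≠ 0 := pow_ne_zero _ hyne
      rcases mul_eq_zero.mp hpal.symm with h | h
      · exact absurd h hpow
      · exact h
    have hinvy : 1 / y ∈ Set.Ioo (0:ℝ) 1 := by
      constructor
      · positivity
      · rw [div_lt_one hy0]; linarith
    have := huniq (1/y) hinvy hinvroot
    rw [← this]
    rw [one_div_one_div]
end

section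
/- For every k ≥ 1, the polynomial P_{k-1} has no real root that is ≤ 0; moreover, every complex root β of P_{k-1} satisfies: β is a positive real number, or |β| = 1. In particular the only real roots of P_{k-1} are the unique root α ∈ (0,1) and its reciprocal 1/α. -/
open Polynomial Finset Real

lemma aeval_Pm1 {R : Type*} [CommRing R] (k : ℕ) (x : R) :
    aeval x (Pm1 k) = 1 + ∑ l ∈ range k, (x^4 - x^3 - x^2 - x) * x^(4*l) := by
  simp [Pm1, map_sum]

lemma Q_identity {R : Type*} [CommRing R] (k : ℕ) (x : R) :
    (x^4 - 1) * aeval x (Pm1 k)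
      = x^(4*k)*x*(x^3-x^2-x-1) + (x^3+x^2+x-1) := by
  have hS := geom_sum_mul (x^4) k
  rw [aeval_Pm1]
  have hpow : ∀ l, x^(4*l) = (x^4)^l := fun l => pow_mul x 4 l
  simp_rw [hpow, ← Finset.mul_sum]
  linear_combination (x^4-x^3-x^2-x) * hS

lemma pal {K : Type*} [Field K] (k : ℕ) {x : K} (hx : x ≠ 0) :
    x^(4*k) * aeval x⁻¹ (Pm1 k) = aeval x (Pm1 k) := by
  rw [aeval_Pm1, aeval_Pm1]
  have h1 : ∑ l ∈ range k, x^(4*k) * (((x⁻¹)^4 - (x⁻¹)^3 - (x⁻¹)^2 - x⁻¹) * (x⁻¹)^(4*l))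
      = ∑ l ∈ range k, (1 - x - x^2 - x^3) * x^(4*l) := by
    rw [← Finset.sum_range_reflect (fun l => (1 - x - x^2 - x^3) * x^(4*l)) k]
    refine Finset.sum_congr rfl (fun l hl => ?_)
    rw [Finset.mem_range] at hl
    obtain ⟨m, rfl⟩ : ∃ m, k = l + m + 1 := ⟨k - l - 1, by omega⟩
    have hm : l + m + 1 - 1 - l = m := by omega
    rw [hm]
    have e : ∀ n : ℕ, x^n * (x⁻¹)^n = 1 := fun n => by
      rw [← mul_pow, mul_inv_cancel₀ hx, one_pow]
    calc x^(4*(l+m+1)) * (((x⁻¹)^4 - (x⁻¹)^3 - (x⁻¹)^2 - x⁻¹) * (x⁻¹)^(4*l))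
        = (x^(4*l) * (x⁻¹)^(4*l)) * x^(4*m) *
          ((x^4*(x⁻¹)^4) - (x^3*(x⁻¹)^3)*x - (x^2*(x⁻¹)^2)*x^2 - (x^1*(x⁻¹)^1)*x^3) := by
          ring
      _ = (1 - x - x^2 - x^3) * x^(4*m) := by rw [e, e, e, e, e]; ring
  rw [mul_add, mul_one, Finset.mul_sum, h1]
  have hS := geom_sum_mul (x^4) k
  have hpow : ∀ l, x^(4*l) = (x^4)^l := fun l => pow_mul x 4 l
  simp_rw [hpow, ← Finset.mul_sum]
  linear_combination - hS

noncomputable def G (k : ℕ) (θ : ℝ) : ℝ :=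
  (Complex.exp ((-(2*(k:ℝ)*θ) : ℝ) * Complex.I) *
    aeval (Complex.exp ((θ:ℝ) * Complex.I)) (Pm1 k)).re

lemma conj_aeval (k : ℕ) (z : ℂ) :
    (starRingEnd ℂ) (aeval z (Pm1 k)) = aeval ((starRingEnd ℂ) z) (Pm1 k) := by
  rw [aeval_Pm1, aeval_Pm1]
  simp

lemma exp_pow (θ : ℝ) (n : ℕ) :
    Complex.exp ((θ:ℝ) * Complex.I) ^ n = Complex.exp (((n:ℝ)*θ : ℝ) * Complex.I) := by
  rw [← Complex.exp_nat_mul]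
  push_cast
  ring_nf

lemma G_def (k : ℕ) (θ : ℝ) :
    ((G k θ : ℝ) : ℂ) = Complex.exp ((-(2*(k:ℝ)*θ) : ℝ) * Complex.I) *
      aeval (Complex.exp ((θ:ℝ) * Complex.I)) (Pm1 k) := by
  have hreal : (starRingEnd ℂ) (Complex.exp ((-(2*(k:ℝ)*θ) : ℝ) * Complex.I) *
      aeval (Complex.exp ((θ:ℝ) * Complex.I)) (Pm1 k)) =
      Complex.exp ((-(2*(k:ℝ)*θ) : ℝ) * Complex.I) *
      aeval (Complex.exp ((θ:ℝ) * Complex.I)) (Pm1 k) := by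
    rw [map_mul, conj_aeval]
    have c1 : (starRingEnd ℂ) (Complex.exp ((-(2*(k:ℝ)*θ) : ℝ) * Complex.I))
        = Complex.exp (((2*(k:ℝ)*θ) : ℝ) * Complex.I) := by
      rw [← Complex.exp_conj]
      congr 1
      rw [map_mul, Complex.conj_I, Complex.conj_ofReal]
      push_cast
      ring
    have c2 : (starRingEnd ℂ) (Complex.exp ((θ:ℝ) * Complex.I))
        = Complex.exp (((-θ : ℝ)) * Complex.I) := by
      rw [← Complex.exp_conj]
      congr 1
      rw [map_mul, Complex.conj_I, Complex.conj_ofReal]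
      push_cast
      ring
    rw [c1, c2]
    have hx : Complex.exp ((θ:ℝ) * Complex.I) ≠ 0 := Complex.exp_ne_zero _
    have hinv : (Complex.exp ((θ:ℝ) * Complex.I))⁻¹ = Complex.exp (((-θ:ℝ)) * Complex.I) := by
      rw [← Complex.exp_neg]
      congr 1
      push_cast
      ring
    have hp := pal (x := Complex.exp ((θ:ℝ) * Complex.I)) k hx
    rw [hinv] at hp
    rw [exp_pow] at hp
    rw [← hp, ← mul_assoc, ← Complex.exp_add]
    congr 2
    push_cast
    ring
  rw [Complex.conj_eq_iff_re] at hreal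
  rw [← hreal]
  rfl

lemma FG (j : ℕ) (θ : ℝ) :
    Real.sin (2*θ) * G (j+1) θ =
      Real.sin (((2*j+4 : ℕ):ℝ)*θ) - Real.sin (((2*j+3 : ℕ):ℝ)*θ)
        - Real.sin (((2*j+2 : ℕ):ℝ)*θ) - Real.sin (((2*j+1 : ℕ):ℝ)*θ) := by
  set w : ℂ := Complex.exp ((θ:ℝ) * Complex.I) with hw
  set v : ℂ := Complex.exp (((-θ : ℝ)) * Complex.I) with hv
  have hvw : v * w = 1 := by
    rw [hv, hw, ← Complex.exp_add]
    rw [show ((-θ:ℝ):ℂ) * Complex.I + (θ:ℝ) * Complex.I = 0 by push_cast; ring]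
    exact Complex.exp_zero
  have hvwn : ∀ n : ℕ, v^n * w^n = 1 := fun n => by
    rw [← mul_pow, hvw, one_pow]
  have s : ∀ n : ℕ, Complex.sin ((((n:ℝ) * θ : ℝ)) : ℂ) * (2*Complex.I) = w^n - v^n := by
    intro n
    rw [hw, hv, exp_pow, exp_pow]
    rw [show (((n:ℝ) * -θ : ℝ):ℂ) = -(((n:ℝ)*θ : ℝ):ℂ) by push_cast; ring]
    rw [Complex.exp_mul_I, Complex.exp_mul_I, Complex.cos_neg, Complex.sin_neg]
    ring
  have hG : ((G (j+1) θ : ℝ) : ℂ) * w^(2*j+2)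
      = aeval w (Pm1 (j+1)) := by
    rw [G_def]
    have : Complex.exp ((-(2*((j+1:ℕ):ℝ)*θ) : ℝ) * Complex.I) = v^(2*j+2) := by
      rw [hv, exp_pow]
      congr 2
      push_cast
      ring
    rw [this, mul_comm (v^(2*j+2)), mul_assoc, hvwn, mul_one]
  have hQ := Q_identity (j+1) w
  have hterm : ∀ p q r t : ℕ, p + q = r → 2*p + q = t →
      (w^p - v^p) * w^r = w^t - w^q := by
    intro p q r t hr ht
    subst hr; subst ht
    linear_combination (-(w^q)) * (hvwn p)
  have sA := s (2*j+4); have sB := s (2*j+3); have sC := s (2*j+2); have sD := s (2*j+1)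
  have s2 := s 2
  have tA := hterm (2*j+4) 0 (2*j+4) (4*j+8) (by omega) (by omega)
  have tB := hterm (2*j+3) 1 (2*j+4) (4*j+7) (by omega) (by omega)
  have tC := hterm (2*j+2) 2 (2*j+4) (4*j+6) (by omega) (by omega)
  have tD := hterm (2*j+1) 3 (2*j+4) (4*j+5) (by omega) (by omega)
  have t2 := hterm 2 (2*j+2) (2*j+4) (2*j+6) (by omega) (by omega)
  have h2w : (2*Complex.I) * w^(2*j+4) ≠ 0 := by
    apply mul_ne_zero
    · simp [Complex.I_ne_zero]
    · exact pow_ne_zero _ (Complex.exp_ne_zero _)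
  rw [← Complex.ofReal_inj]
  apply mul_right_cancel₀ h2w
  have cast2 : ((Real.sin (2*θ) : ℝ) : ℂ) = Complex.sin ((((2:ℕ):ℝ) * θ : ℝ) : ℂ) := by
    norm_num
  push_cast [cast2] at sA sB sC sD s2 ⊢
  linear_combination (((G (j+1) θ : ℝ)):ℂ) * w^(2*j+4) * s2
    + (((G (j+1) θ : ℝ)):ℂ) * t2 + (w^4 - 1) * hG + hQ
    - w^(2*j+4) * sA + w^(2*j+4) * sB + w^(2*j+4) * sC + w^(2*j+4) * sD
    - tA + tB + tC + tD

noncomputable def pt (j m : ℕ) : ℝ := (2*m+1)*π/(4*j+5)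

lemma cos_nat_pi (m:ℕ) : Real.cos (m*π) = (-1)^m := by
  induction m with
  | zero => simp
  | succ n ih =>
    have : ((n+1:ℕ):ℝ)*π = n*π + π := by push_cast; ring
    rw [this, Real.cos_add_pi, ih]; ring

lemma cos_odd_half (m:ℕ) : Real.cos ((2*m+1)*π/2) = 0 := by
  have : ((2*(m:ℝ)+1)*π/2) = m*π + π/2 := by ring
  rw [this, Real.cos_add, Real.cos_pi_div_two, Real.sin_nat_mul_pi]; ring

lemma sin_odd_half (m:ℕ) : Real.sin ((2*m+1)*π/2) = (-1)^m := by
  have : ((2*(m:ℝ)+1)*π/2) = m*π + π/2 := by ring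
  rw [this, Real.sin_add, Real.cos_pi_div_two, Real.sin_nat_mul_pi, Real.sin_pi_div_two,
    cos_nat_pi]; ring

lemma GF_at (j m : ℕ) :
    Real.sin (2 * pt j m) * G (j+1) (pt j m) = -2*(-1)^m*Real.cos ((pt j m)/2) := by
  rw [FG]
  set t := pt j m with ht
  have h45 : (4*(j:ℝ)+5) ≠ 0 := by positivity
  have hhalf : (4*(j:ℝ)+5)*t/2 = (2*m+1)*π/2 := by
    rw [ht, pt]; field_simp
  have h1 : Real.sin (((2*j+4 : ℕ):ℝ)*t) - Real.sin (((2*j+1 : ℕ):ℝ)*t)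
      = 2 * Real.sin (3*t/2) * Real.cos ((2*m+1)*π/2) := by
    rw [Real.sin_sub_sin, ← hhalf]
    congr 2
    · push_cast; ring
    · push_cast; ring
  have h2 : Real.sin (((2*j+3 : ℕ):ℝ)*t) + Real.sin (((2*j+2 : ℕ):ℝ)*t)
      = 2 * Real.sin ((2*m+1)*π/2) * Real.cos (t/2) := by
    have := Real.sin_sub_sin (((2*j+3 : ℕ):ℝ)*t) (-(((2*j+2 : ℕ):ℝ)*t))
    rw [Real.sin_neg] at this
    rw [show Real.sin (((2*j+3 : ℕ):ℝ)*t) + Real.sin (((2*j+2 : ℕ):ℝ)*t)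
        = Real.sin (((2*j+3 : ℕ):ℝ)*t) - -Real.sin (((2*j+2 : ℕ):ℝ)*t) by ring, this,
      ← hhalf]
    congr 2
    · push_cast; ring
    · push_cast; ring
  have expand : Real.sin (((2*j+4 : ℕ):ℝ)*t) - Real.sin (((2*j+3 : ℕ):ℝ)*t)
        - Real.sin (((2*j+2 : ℕ):ℝ)*t) - Real.sin (((2*j+1 : ℕ):ℝ)*t)
      = (Real.sin (((2*j+4 : ℕ):ℝ)*t) - Real.sin (((2*j+1 : ℕ):ℝ)*t))
        - (Real.sin (((2*j+3 : ℕ):ℝ)*t) + Real.sin (((2*j+2 : ℕ):ℝ)*t)) := by ring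
  rw [expand, h1, h2, cos_odd_half, sin_odd_half]
  ring

lemma pt_pos (j m : ℕ) : 0 < pt j m := by
  rw [pt]; positivity

lemma pt_lt (j : ℕ) {m : ℕ} (hm : m ≤ 2*j+1) : pt j m < π := by
  rw [pt, div_lt_iff₀ (by positivity)]
  have : (2*(m:ℝ)+1) < 4*j+5 := by
    have : (m:ℝ) ≤ 2*j+1 := by exact_mod_cast hm
    nlinarith
  nlinarith [Real.pi_pos]

lemma pt_mono (j : ℕ) {m m' : ℕ} (h : m < m') : pt j m < pt j m' := by
  rw [pt, pt, div_lt_div_iff₀ (by positivity) (by positivity)]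
  have hm : (m:ℝ) < m' := by exact_mod_cast h
  have h1 : (2*(m:ℝ)+1)*π < (2*(m':ℝ)+1)*π := by
    apply mul_lt_mul_of_pos_right _ Real.pi_pos
    linarith
  apply mul_lt_mul_of_pos_right h1 (by positivity)

lemma pt_last (j : ℕ) : pt j (2*j+2) = π := by
  rw [pt]
  have : (2*((2*j+2:ℕ):ℝ)+1) = 4*j+5 := by push_cast; ring
  rw [this]
  field_simp

lemma pt_le_pi (j : ℕ) {m : ℕ} (hm : m ≤ 2*j+2) : pt j m ≤ π := by
  rcases Nat.lt_or_ge m (2*j+2) with h | h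
  · exact le_of_lt (pt_lt j (by omega))
  · have : m = 2*j+2 := by omega
    rw [this, pt_last]

lemma cos_half_pos (j : ℕ) {m : ℕ} (hm : m ≤ 2*j+1) : 0 < Real.cos ((pt j m)/2) := by
  apply Real.cos_pos_of_mem_Ioo
  constructor
  · linarith [pt_pos j m, Real.pi_pos]
  · linarith [pt_lt j hm, Real.pi_pos]

lemma sin2pt_pos (j : ℕ) {m : ℕ} (hm : m ≤ j) : 0 < Real.sin (2 * pt j m) := by
  apply Real.sin_pos_of_pos_of_lt_pi
  · linarith [pt_pos j m]
  · rw [pt]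
    rw [show 2*((2*(m:ℝ)+1)*π/(4*j+5)) = (4*m+2)*π/(4*j+5) by ring]
    rw [div_lt_iff₀ (by positivity)]
    have : (m:ℝ) ≤ j := by exact_mod_cast hm
    nlinarith [Real.pi_pos]

lemma sin2pt_neg (j : ℕ) {m : ℕ} (h1 : j+1 ≤ m) (h2 : m ≤ 2*j+1) :
    Real.sin (2 * pt j m) < 0 := by
  have key : 0 < Real.sin (2 * pt j m - π) → Real.sin (2 * pt j m) < 0 := by
    intro h
    have := Real.sin_pi_sub (2 * pt j m - π)
    rw [show π - (2 * pt j m - π) = 2*π - 2*pt j m by ring] at this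
    have h2' := Real.sin_neg (2*π - 2*pt j m)
    rw [show -(2*π - 2*pt j m) = 2*pt j m - 2*π by ring] at h2'
    have p2 : Real.sin (2*pt j m - 2*π) = Real.sin (2*pt j m) := by
      rw [Real.sin_sub_two_pi]
    nlinarith [this, h2', p2, h]
  apply key
  apply Real.sin_pos_of_pos_of_lt_pi
  · rw [pt]
    rw [show 2*((2*(m:ℝ)+1)*π/(4*j+5)) - π = ((4*m+2) - (4*j+5))*π/(4*j+5) by field_simp; ring]
    have : (j:ℝ)+1 ≤ m := by exact_mod_cast h1
    have hpos : (0:ℝ) < (4*m+2) - (4*j+5) := by nlinarith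
    positivity
  · rw [pt]
    rw [show 2*((2*(m:ℝ)+1)*π/(4*j+5)) - π = ((4*m+2) - (4*j+5))*π/(4*j+5) by field_simp; ring]
    rw [div_lt_iff₀ (by positivity)]
    have : (m:ℝ) ≤ 2*j+1 := by exact_mod_cast h2
    nlinarith [Real.pi_pos]

lemma aeval_neg_one (k : ℕ) : aeval (-1 : ℂ) (Pm1 k) = 2*(k:ℂ)+1 := by
  rw [aeval_Pm1]
  have : ∀ l ∈ range k, ((-1:ℂ)^4 - (-1)^3 - (-1)^2 - (-1)) * (-1)^(4*l) = 2 := by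
    intro l _
    rw [pow_mul]
    norm_num
  rw [Finset.sum_congr rfl this, Finset.sum_const, card_range]
  push_cast
  ring

lemma Gpi (j : ℕ) : G (j+1) π = 2*(j:ℝ)+3 := by
  rw [G]
  have e1 : Complex.exp ((π:ℝ) * Complex.I) = -1 := Complex.exp_pi_mul_I
  have e2 : Complex.exp ((-(2*((j+1:ℕ):ℝ)*π) : ℝ) * Complex.I) = 1 := by
    have : ((-(2*((j+1:ℕ):ℝ)*π) : ℝ) : ℂ) * Complex.I = (-(j+1) : ℤ) * (2*π*Complex.I) := by
      push_cast; ring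
    rw [this, Complex.exp_int_mul_two_pi_mul_I]
  rw [e1, e2, aeval_neg_one, one_mul]
  have : (2*((j+1:ℕ):ℂ)+1) = ((2*(j:ℝ)+3 : ℝ) : ℂ) := by push_cast; ring
  rw [this, Complex.ofReal_re]

lemma Gpair (j : ℕ) {m : ℕ} (hm : m ≤ 2*j+1) (hne : m ≠ j) :
    G (j+1) (pt j m) * G (j+1) (pt j (m+1)) < 0 := by
  have h1 := GF_at j m
  have c1 := cos_half_pos j hm
  have hsq : ((-1:ℝ)^m)^2 = 1 := by
    rw [← pow_mul, pow_mul']; norm_num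
  rcases Nat.lt_or_ge m (2*j+1) with hlt | hge
  · have hm1 : m+1 ≤ 2*j+1 := hlt
    have h2 := GF_at j (m+1)
    have c2 := cos_half_pos j hm1
    have prod : (Real.sin (2 * pt j m) * G (j+1) (pt j m)) *
        (Real.sin (2 * pt j (m+1)) * G (j+1) (pt j (m+1))) < 0 := by
      rw [h1, h2]
      have e : (-2*(-1:ℝ)^m*Real.cos ((pt j m)/2)) * (-2*(-1)^(m+1)*Real.cos ((pt j (m+1))/2))
          = -4 * (((-1:ℝ)^m)^2) * (Real.cos ((pt j m)/2) * Real.cos ((pt j (m+1))/2)) := by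
        rw [pow_succ]; ring
      rw [e, hsq]
      nlinarith [mul_pos c1 c2]
    have hs : 0 < Real.sin (2 * pt j m) * Real.sin (2 * pt j (m+1)) := by
      rcases Nat.lt_or_ge m j with hmj | hmj
      · exact mul_pos (sin2pt_pos j (le_of_lt hmj)) (sin2pt_pos j hmj)
      · have hj1 : j+1 ≤ m := by omega
        have := sin2pt_neg j hj1 hm
        have := sin2pt_neg j (by omega : j+1 ≤ m+1) hm1
        nlinarith
    by_contra hcon
    push_neg at hcon
    have hnn : 0 ≤ (Real.sin (2*pt j m) * Real.sin (2*pt j (m+1))) *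
        (G (j+1) (pt j m) * G (j+1) (pt j (m+1))) := mul_nonneg hs.le hcon
    nlinarith [prod, hnn]
  · have hmeq : m = 2*j+1 := le_antisymm hm hge
    have hGm : G (j+1) (pt j m) < 0 := by
      have hsin := sin2pt_neg j (by omega) hm
      have hF : 0 < -2*(-1:ℝ)^m*Real.cos ((pt j m)/2) := by
        have : (-1:ℝ)^m = -1 := by
          rw [hmeq]; rw [pow_succ, pow_mul]; norm_num
        rw [this]; nlinarith
      nlinarith [h1]
    have : pt j (m+1) = π := by rw [hmeq, show 2*j+1+1 = 2*j+2 from rfl, pt_last]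
    rw [this, Gpi]
    nlinarith [hGm]

lemma G_cont (k : ℕ) : Continuous (G k) := by
  apply Complex.continuous_re.comp
  apply Continuous.mul
  · apply Complex.continuous_exp.comp
    fun_prop
  · exact (Polynomial.continuous_aeval (Pm1 k)).comp
      (Complex.continuous_exp.comp (by fun_prop))

lemma exists_G_root {k : ℕ} {a b : ℝ} (hab : a < b) (h : G k a * G k b < 0) :
    ∃ θ ∈ Set.Ioo a b, G k θ = 0 := by
  rcases mul_neg_iff.mp h with ⟨ha, hb⟩ | ⟨ha, hb⟩
  · have : (0:ℝ) ∈ Set.Ioo (G k b) (G k a) := ⟨hb, ha⟩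
    have himg := intermediate_value_Ioo' hab.le (G_cont k).continuousOn this
    obtain ⟨θ, hθ, hθ0⟩ := himg
    exact ⟨θ, hθ, hθ0⟩
  · have : (0:ℝ) ∈ Set.Ioo (G k a) (G k b) := ⟨ha, hb⟩
    have himg := intermediate_value_Ioo hab.le (G_cont k).continuousOn this
    obtain ⟨θ, hθ, hθ0⟩ := himg
    exact ⟨θ, hθ, hθ0⟩

lemma natDegree_Pm1 (k : ℕ) : (Pm1 k).natDegree ≤ 4*k := by
  rw [Pm1]
  apply le_trans (natDegree_add_le _ _)
  rw [natDegree_one]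
  apply max_le (Nat.zero_le _)
  apply Polynomial.natDegree_sum_le_of_forall_le
  intro l hl
  rw [Finset.mem_range] at hl
  apply le_trans (natDegree_mul_le)
  have h1 : (X^4 - X^3 - X^2 - X : ℤ[X]).natDegree ≤ 4 := by
    compute_degree
  have h2 : (X^(4*l) : ℤ[X]).natDegree = 4*l := natDegree_X_pow _
  omega

lemma Pm1_map_ne (k : ℕ) : (Pm1 k).map (algebraMap ℤ ℂ) ≠ 0 := by
  intro h
  have : aeval (0:ℂ) (Pm1 k) = 0 := by
    rw [aeval_def, ← eval_map, h, eval_zero]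
  rw [aeval_Pm1] at this
  simp at this

lemma alpha_exists (j : ℕ) : ∃ α ∈ Set.Ioo (0:ℝ) 1, aeval α (Pm1 (j+1)) = 0 := by
  have f0 : aeval (0:ℝ) (Pm1 (j+1)) = 1 := by
    rw [aeval_Pm1]
    have : ∀ l ∈ range (j+1), ((0:ℝ)^4 - 0^3 - 0^2 - 0) * 0^(4*l) = 0 := by
      intro l _; ring
    rw [Finset.sum_congr rfl this, Finset.sum_const]
    simp
  have f1 : aeval (1:ℝ) (Pm1 (j+1)) = -(2*(j:ℝ)+1) := by
    rw [aeval_Pm1]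
    have : ∀ l ∈ range (j+1), ((1:ℝ)^4 - 1^3 - 1^2 - 1) * 1^(4*l) = -2 := by
      intro l _; norm_num
    rw [Finset.sum_congr rfl this, Finset.sum_const, card_range]
    push_cast; ring
  have hc : ContinuousOn (fun x : ℝ => aeval x (Pm1 (j+1))) (Set.Icc 0 1) :=
    (Polynomial.continuous_aeval _).continuousOn
  have h0 : (0:ℝ) ∈ Set.Ioo (aeval (1:ℝ) (Pm1 (j+1))) (aeval (0:ℝ) (Pm1 (j+1))) := by
    rw [f0, f1]
    constructor
    · have : (0:ℝ) ≤ j := Nat.cast_nonneg j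
      linarith
    · norm_num
  have := intermediate_value_Ioo' (by norm_num : (0:ℝ) ≤ 1) hc h0
  obtain ⟨α, hα, hα0⟩ := this
  exact ⟨α, hα, hα0⟩

lemma aeval_coeC (k : ℕ) (x : ℝ) :
    aeval ((x : ℝ) : ℂ) (Pm1 k) = ((aeval x (Pm1 k) : ℝ) : ℂ) := by
  have := Polynomial.aeval_algebraMap_apply ℂ x (Pm1 k)
  simpa using this

/-- For `k ≥ 1`: `P_{k-1}` has no real root `≤ 0`; every complex root is
a positive real or has absolute value `1`; and the only real roots are the unique
`α ∈ (0,1)` and its reciprocal `1/α`. -/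
theorem stmt_5 (k : ℕ) (hk : 1 ≤ k) :
    (∀ x : ℝ, x ≤ 0 → Polynomial.aeval x (Pm1 k) ≠ 0) ∧
    (∀ β : ℂ, Polynomial.aeval β (Pm1 k) = 0 →
      (∃ r : ℝ, 0 < r ∧ β = (r : ℂ)) ∨ ‖β‖ = 1) ∧
    (∃ α : ℝ, α ∈ Set.Ioo (0 : ℝ) 1 ∧ Polynomial.aeval α (Pm1 k) = 0 ∧
      ∀ x : ℝ, Polynomial.aeval x (Pm1 k) = 0 → x = α ∨ x = 1 / α) := by
  obtain ⟨j, rfl⟩ : ∃ j, k = j + 1 := ⟨k - 1, by omega⟩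
  -- the real root α and its reciprocal
  obtain ⟨α, hαIoo, hαroot⟩ := alpha_exists j
  obtain ⟨hα0, hα1⟩ := hαIoo
  have hαne : α ≠ 0 := ne_of_gt hα0
  have hαinv : aeval α⁻¹ (Pm1 (j+1)) = 0 := by
    have hp := pal (x := α) (j+1) hαne
    rw [hαroot] at hp
    have := mul_eq_zero.mp hp
    rcases this with h | h
    · exact absurd h (pow_ne_zero _ hαne)
    · exact h
  have hαlt : α < α⁻¹ := by
    have h1 : 1 < α⁻¹ := by
      rw [lt_inv_comm₀] <;> simp [hα0, hα1]
    linarith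
  -- circle roots via sign changes of G
  set M : Finset ℕ := (Finset.range (2*j+2)).erase j with hM
  have hroot : ∀ m ∈ M, ∃ θ, θ ∈ Set.Ioo (pt j m) (pt j (m+1)) ∧ G (j+1) θ = 0 := by
    intro m hm
    obtain ⟨hne, hmem⟩ := Finset.mem_erase.mp hm
    rw [Finset.mem_range] at hmem
    have := Gpair j (show m ≤ 2*j+1 by omega) hne
    obtain ⟨θ, h1, h2⟩ := exists_G_root (pt_mono j (Nat.lt_succ_self m)) this
    exact ⟨θ, h1, h2⟩
  choose! θf hθmem hθG using hroot
  have hθIoo : ∀ m ∈ M, θf m ∈ Set.Ioo (0:ℝ) π := by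
    intro m hm
    obtain ⟨hne, hmem⟩ := Finset.mem_erase.mp hm
    rw [Finset.mem_range] at hmem
    obtain ⟨h1, h2⟩ := hθmem m hm
    constructor
    · linarith [pt_pos j m]
    · have : pt j (m+1) ≤ π := pt_le_pi j (by omega)
      linarith
  have hθinj : ∀ m ∈ M, ∀ m' ∈ M, θf m = θf m' → m = m' := by
    intro m hm m' hm' heq
    by_contra hne
    rcases Nat.lt_or_ge m m' with h | h
    · have h1 := (hθmem m hm).2
      have h2 := (hθmem m' hm').1
      have : pt j (m+1) ≤ pt j m' := by
        rcases Nat.lt_or_ge (m+1) m' with hh | hh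
        · exact le_of_lt (pt_mono j hh)
        · have : m + 1 = m' := by omega
          rw [this]
      linarith [heq ▸ h1]
    · have hlt : m' < m := by omega
      have h1 := (hθmem m' hm').2
      have h2 := (hθmem m hm).1
      have : pt j (m'+1) ≤ pt j m := by
        rcases Nat.lt_or_ge (m'+1) m with hh | hh
        · exact le_of_lt (pt_mono j hh)
        · have : m' + 1 = m := by omega
          rw [this]
      linarith [heq ▸ h1]
  -- roots of the polynomial on the circle
  have hzroot : ∀ m ∈ M, aeval (Complex.exp ((θf m : ℝ) * Complex.I)) (Pm1 (j+1)) = 0 := by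
    intro m hm
    have h := G_def (j+1) (θf m)
    rw [hθG m hm] at h
    have := h.symm
    rw [Complex.ofReal_zero] at this
    rcases mul_eq_zero.mp this with h' | h'
    · exact absurd h' (Complex.exp_ne_zero _)
    · exact h'
  have hzroot' : ∀ m ∈ M, aeval (Complex.exp ((-(θf m) : ℝ) * Complex.I)) (Pm1 (j+1)) = 0 := by
    intro m hm
    have := hzroot m hm
    have hc := conj_aeval (j+1) (Complex.exp ((θf m : ℝ) * Complex.I))
    rw [this, map_zero] at hc
    have he : (starRingEnd ℂ) (Complex.exp ((θf m : ℝ) * Complex.I))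
        = Complex.exp ((-(θf m) : ℝ) * Complex.I) := by
      rw [← Complex.exp_conj]
      congr 1
      rw [map_mul, Complex.conj_I, Complex.conj_ofReal]
      push_cast
      ring
    rw [he] at hc
    exact hc.symm
  -- the finset of all roots
  set Pc : Polynomial ℂ := (Pm1 (j+1)).map (algebraMap ℤ ℂ) with hPc
  have hmemroots : ∀ z : ℂ, aeval z (Pm1 (j+1)) = 0 → z ∈ Pc.roots.toFinset := by
    intro z hz
    rw [Multiset.mem_toFinset, Polynomial.mem_roots (Pm1_map_ne (j+1))]
    rw [Polynomial.IsRoot.def, eval_map, ← aeval_def]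
    exact hz
  set R : Finset ℂ :=
    ((M.image fun m => Complex.exp ((θf m : ℝ) * Complex.I)) ∪
      (M.image fun m => Complex.exp ((-(θf m) : ℝ) * Complex.I))) ∪
    {((α : ℝ) : ℂ), ((α⁻¹ : ℝ) : ℂ)} with hR
  -- basic im/re facts
  have him1 : ∀ m ∈ M, (Complex.exp ((θf m : ℝ) * Complex.I)).im > 0 := by
    intro m hm
    rw [Complex.exp_ofReal_mul_I_im]
    obtain ⟨h1, h2⟩ := hθIoo m hm
    exact Real.sin_pos_of_pos_of_lt_pi h1 h2
  have him2 : ∀ m ∈ M, (Complex.exp ((-(θf m) : ℝ) * Complex.I)).im < 0 := by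
    intro m hm
    rw [Complex.exp_ofReal_mul_I_im, Real.sin_neg]
    obtain ⟨h1, h2⟩ := hθIoo m hm
    have := Real.sin_pos_of_pos_of_lt_pi h1 h2
    linarith
  -- R consists of roots
  have hsub : R ⊆ Pc.roots.toFinset := by
    intro z hz
    rw [hR] at hz
    rcases Finset.mem_union.mp hz with hz | hz
    · rcases Finset.mem_union.mp hz with hz | hz
      · obtain ⟨m, hm, rfl⟩ := Finset.mem_image.mp hz
        exact hmemroots _ (hzroot m hm)
      · obtain ⟨m, hm, rfl⟩ := Finset.mem_image.mp hz
        exact hmemroots _ (hzroot' m hm)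
    · rcases Finset.mem_insert.mp hz with rfl | hz
      · apply hmemroots
        rw [aeval_coeC, hαroot, Complex.ofReal_zero]
      · rw [Finset.mem_singleton] at hz
        subst hz
        apply hmemroots
        rw [aeval_coeC, hαinv, Complex.ofReal_zero]
  -- cardinality of R
  have hMcard : M.card = 2*j+1 := by
    rw [hM, Finset.card_erase_of_mem (Finset.mem_range.mpr (by omega)), Finset.card_range]
    omega
  have hcard1 : (M.image fun m => Complex.exp ((θf m : ℝ) * Complex.I)).card = 2*j+1 := by
    rw [Finset.card_image_of_injOn, hMcard]
    intro m hm m' hm' heq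
    apply hθinj m hm m' hm'
    have hre : Real.cos (θf m) = Real.cos (θf m') := by
      have := congrArg Complex.re heq
      rwa [Complex.exp_ofReal_mul_I_re, Complex.exp_ofReal_mul_I_re] at this
    obtain ⟨a1, a2⟩ := hθIoo m hm
    obtain ⟨b1, b2⟩ := hθIoo m' hm'
    exact Real.injOn_cos ⟨a1.le, a2.le⟩ ⟨b1.le, b2.le⟩ hre
  have hcard2 : (M.image fun m => Complex.exp ((-(θf m) : ℝ) * Complex.I)).card = 2*j+1 := by
    rw [Finset.card_image_of_injOn, hMcard]
    intro m hm m' hm' heq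
    apply hθinj m hm m' hm'
    have hre : Real.cos (-(θf m)) = Real.cos (-(θf m')) := by
      have := congrArg Complex.re heq
      rwa [Complex.exp_ofReal_mul_I_re, Complex.exp_ofReal_mul_I_re] at this
    rw [Real.cos_neg, Real.cos_neg] at hre
    obtain ⟨a1, a2⟩ := hθIoo m hm
    obtain ⟨b1, b2⟩ := hθIoo m' hm'
    exact Real.injOn_cos ⟨a1.le, a2.le⟩ ⟨b1.le, b2.le⟩ hre
  have hdisj12 : Disjoint (M.image fun m => Complex.exp ((θf m : ℝ) * Complex.I))
      (M.image fun m => Complex.exp ((-(θf m) : ℝ) * Complex.I)) := by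
    rw [Finset.disjoint_left]
    intro a ha hb
    obtain ⟨m, hm, rfl⟩ := Finset.mem_image.mp ha
    obtain ⟨m', hm', heq⟩ := Finset.mem_image.mp hb
    have h1 := him1 m hm
    have h2 := him2 m' hm'
    rw [heq] at h2
    linarith
  have hdisjU : Disjoint ((M.image fun m => Complex.exp ((θf m : ℝ) * Complex.I)) ∪
      (M.image fun m => Complex.exp ((-(θf m) : ℝ) * Complex.I)))
      ({((α : ℝ) : ℂ), ((α⁻¹ : ℝ) : ℂ)} : Finset ℂ) := by
    rw [Finset.disjoint_left]
    intro a ha hb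
    have haim : a.im ≠ 0 := by
      rcases Finset.mem_union.mp ha with h | h
      · obtain ⟨m, hm, rfl⟩ := Finset.mem_image.mp h
        exact ne_of_gt (him1 m hm)
      · obtain ⟨m, hm, rfl⟩ := Finset.mem_image.mp h
        exact ne_of_lt (him2 m hm)
    rcases Finset.mem_insert.mp hb with rfl | hb
    · exact haim (Complex.ofReal_im α)
    · rw [Finset.mem_singleton] at hb
      subst hb
      exact haim (Complex.ofReal_im _)
  have hpaircard : ({((α : ℝ) : ℂ), ((α⁻¹ : ℝ) : ℂ)} : Finset ℂ).card = 2 := by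
    rw [Finset.card_insert_of_notMem, Finset.card_singleton]
    rw [Finset.mem_singleton]
    intro h
    have := Complex.ofReal_inj.mp h
    linarith
  have hRcard : R.card = 4*(j+1) := by
    rw [hR, Finset.card_union_of_disjoint hdisjU, Finset.card_union_of_disjoint hdisj12,
      hcard1, hcard2, hpaircard]
    omega
  -- counting
  have hRTcard : Pc.roots.toFinset.card ≤ 4*(j+1) := by
    apply le_trans (Multiset.toFinset_card_le _)
    apply le_trans (Polynomial.card_roots' Pc)
    apply le_trans (Polynomial.natDegree_map_le)
    exact natDegree_Pm1 (j+1)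
  have hEq : R = Pc.roots.toFinset := by
    apply Finset.eq_of_subset_of_card_le hsub
    rw [hRcard]
    exact hRTcard
  have hclass : ∀ z : ℂ, aeval z (Pm1 (j+1)) = 0 → z ∈ R := by
    intro z hz
    rw [hEq]
    exact hmemroots z hz
  -- classification of members of R
  have hform : ∀ z ∈ R, (z.im ≠ 0 ∧ ‖z‖ = 1) ∨ z = ((α:ℝ):ℂ) ∨ z = ((α⁻¹:ℝ):ℂ) := by
    intro z hz
    rw [hR] at hz
    rcases Finset.mem_union.mp hz with hz | hz
    · rcases Finset.mem_union.mp hz with hz | hz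
      · obtain ⟨m, hm, rfl⟩ := Finset.mem_image.mp hz
        exact Or.inl ⟨ne_of_gt (him1 m hm), Complex.norm_exp_ofReal_mul_I _⟩
      · obtain ⟨m, hm, rfl⟩ := Finset.mem_image.mp hz
        exact Or.inl ⟨ne_of_lt (him2 m hm), Complex.norm_exp_ofReal_mul_I _⟩
    · rcases Finset.mem_insert.mp hz with rfl | hz
      · exact Or.inr (Or.inl rfl)
      · rw [Finset.mem_singleton] at hz
        exact Or.inr (Or.inr hz)
  refine ⟨?_, ?_, ?_⟩
  · -- no real root ≤ 0
    intro x hx hzero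
    have hzC : aeval ((x:ℝ):ℂ) (Pm1 (j+1)) = 0 := by
      rw [aeval_coeC, hzero, Complex.ofReal_zero]
    rcases hform _ (hclass _ hzC) with ⟨him, _⟩ | h | h
    · exact him (Complex.ofReal_im x)
    · have := Complex.ofReal_inj.mp h
      linarith
    · have := Complex.ofReal_inj.mp h
      have hαinvpos : 0 < α⁻¹ := by positivity
      linarith
  · -- every complex root is positive real or on the circle
    intro β hβ
    rcases hform _ (hclass _ hβ) with ⟨_, habs⟩ | h | h
    · exact Or.inr habs
    · exact Or.inl ⟨α, hα0, h⟩
    · exact Or.inl ⟨α⁻¹, by positivity, h⟩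
  · -- the real roots are exactly α and 1/α
    refine ⟨α, ⟨hα0, hα1⟩, hαroot, ?_⟩
    intro x hx
    have hzC : aeval ((x:ℝ):ℂ) (Pm1 (j+1)) = 0 := by
      rw [aeval_coeC, hx, Complex.ofReal_zero]
    rcases hform _ (hclass _ hzC) with ⟨him, _⟩ | h | h
    · exact absurd (Complex.ofReal_im x) him
    · exact Or.inl (Complex.ofReal_inj.mp h)
    · right
      rw [one_div]
      exact Complex.ofReal_inj.mp h
end

section
/- For every k ≥ 1: if k ≢ 2 (mod 3), then no complex root of P_{k-1} is a root of unity; if k ≡ 2 (mod 3), then the only complex roots of P_{k-1} that are roots of unity are the two primitive cube roots of unity e^{±2πi/3}. -/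
open Polynomial

noncomputable def Hk (k : ℕ) : Polynomial ℤ :=
  X ^ (4*k+1) * (X^3 - X^2 - X - 1) + (X^3 + X^2 + X - 1)

lemma keyA (k : ℕ) : (X^4 - 1) * Pm1 k = Hk k := by
  induction k with
  | zero => simp [Pm1, Hk]; ring
  | succ n ih =>
    rw [Pm1, Finset.sum_range_succ, ← add_assoc, ← Pm1] at *
    rw [mul_add, ih, Hk, Hk]
    ring

lemma keyB (k : ℕ) : (Hk k).map (Int.castRingHom (ZMod 2)) =
    (X - 1)^3 * (X ^ (4*k+1) + 1) := by
  have h2 : (2 : (ZMod 2)[X]) = 0 := by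
    rw [(map_ofNat (C : ZMod 2 →+* (ZMod 2)[X]) 2).symm, show (2 : ZMod 2) = 0 by decide, map_zero]
  have key : (X - 1 : (ZMod 2)[X])^3 * (X ^ (4*k+1) + 1) =
      X ^ (4*k+1) * (X^3 - X^2 - X - 1) + (X^3 + X^2 + X - 1)
      + 2 * (-X^(4*k+1+2) + 2*X^(4*k+1+1) - 2*X^2 + X) := by
    ring
  rw [key, h2, zero_mul, add_zero, Hk]
  simp

lemma evalP (k : ℕ) (β : ℂ) :
    Polynomial.aeval β (Pm1 k) = 1 + ∑ l ∈ Finset.range k, (β^4 - β^3 - β^2 - β) * β^(4*l) := by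
  simp [Pm1]

lemma evalP_one (k : ℕ) (hk : 1 ≤ k) : Polynomial.aeval (1:ℂ) (Pm1 k) ≠ 0 := by
  rw [evalP]
  simp only [one_pow, mul_one]
  norm_num
  intro h
  have : ((2*k : ℕ) : ℂ) = 1 := by push_cast; linear_combination -h
  have : (2*k : ℕ) = 1 := by exact_mod_cast this
  omega

lemma evalP_two (k : ℕ) (β : ℂ) (hβ : β^4 = 1) (hc : β^4 - β^3 - β^2 - β = 2) :
    Polynomial.aeval β (Pm1 k) ≠ 0 := by
  rw [evalP]
  have : ∀ l, (β^4 - β^3 - β^2 - β) * β^(4*l) = 2 := by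
    intro l
    rw [hc, pow_mul, hβ, one_pow, mul_one]
  rw [Finset.sum_congr rfl (fun l _ => this l), Finset.sum_const, Finset.card_range]
  intro h
  have : ((2*k+1 : ℕ) : ℂ) = 0 := by push_cast; linear_combination h
  have : (2*k+1 : ℕ) = 0 := by exact_mod_cast this
  omega

lemma evalP_negone (k : ℕ) : Polynomial.aeval (-1:ℂ) (Pm1 k) ≠ 0 := by
  apply evalP_two k _ (by norm_num) (by norm_num)

lemma evalP_i (k : ℕ) (β : ℂ) (hβ : β^2 = -1) : Polynomial.aeval β (Pm1 k) ≠ 0 := by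
  apply evalP_two k _ (by rw [show (4:ℕ) = 2*2 by rfl, pow_mul, hβ]; norm_num)
  have h4 : β^4 = 1 := by rw [show (4:ℕ) = 2*2 by rfl, pow_mul, hβ]; norm_num
  have h3 : β^3 = -β := by rw [pow_succ, hβ]; ring
  rw [h4, h3, hβ]; ring


lemma dvd_of_cyclotomic_dvd {m M : ℕ} (hm : 2 ≤ m) (hmodd : ¬ 2 ∣ m)
    (hdvd : cyclotomic m (ZMod 2) ∣ (X - 1)^3 * (X ^ M + 1)) : m ∣ M := by
  set K := AlgebraicClosure (ZMod 2)
  haveI : CharP K 2 := charP_of_injective_algebraMap (algebraMap (ZMod 2) K).injective 2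
  haveI : NeZero (m : K) := NeZero.of_not_dvd K hmodd
  obtain ⟨α, hα⟩ : ∃ α : K, (cyclotomic m K).IsRoot α := by
    apply IsAlgClosed.exists_root
    rw [degree_cyclotomic]
    intro h
    have := Nat.totient_pos.mpr (by omega : 0 < m)
    simp only [Nat.cast_eq_zero] at h
    omega
  have hprimα : IsPrimitiveRoot α m := isRoot_cyclotomic_iff.mp hα
  have hdvdK : cyclotomic m K ∣ (X - 1)^3 * (X ^ M + 1) := by
    have := Polynomial.map_dvd (algebraMap (ZMod 2) K) hdvd
    rwa [map_cyclotomic, Polynomial.map_mul, Polynomial.map_pow, Polynomial.map_sub,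
      Polynomial.map_add, Polynomial.map_pow, Polynomial.map_one, Polynomial.map_X] at this
  obtain ⟨t, ht⟩ := hdvdK
  have heval : (α - 1)^3 * (α ^ M + 1) = 0 := by
    have h2 := congrArg (Polynomial.eval α) ht
    simp only [eval_mul, eval_pow, eval_sub, eval_add, eval_one, eval_X] at h2
    rw [h2, hα.eq_zero, zero_mul]
  rcases mul_eq_zero.mp heval with h | h
  · exfalso
    have hα1 : α = 1 := sub_eq_zero.mp (pow_eq_zero_iff (n := 3) (by norm_num) |>.mp h)
    have hd : m ∣ 1 := hprimα.dvd_of_pow_eq_one 1 (by rw [hα1, one_pow])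
    have := Nat.le_of_dvd one_pos hd
    omega
  · have hM1 : α ^ M = 1 := by
      have : α ^ M = -1 := by linear_combination h
      rw [this, CharTwo.neg_eq]
    exact (hprimα.pow_eq_one_iff_dvd M).mp hM1

/-- The main classification. -/
lemma core (k : ℕ) (hk : 1 ≤ k) (β : ℂ) (hroot : Polynomial.aeval β (Pm1 k) = 0)
    (hfin : ∃ N : ℕ, 0 < N ∧ β ^ N = 1) : β^2 + β + 1 = 0 ∧ k % 3 = 2 := by
  obtain ⟨N, hN, hβN⟩ := hfin
  have hford : IsOfFinOrder β := isOfFinOrder_iff_pow_eq_one.mpr ⟨N, hN, hβN⟩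
  set n := orderOf β with hn_def
  have hprim : IsPrimitiveRoot β n := IsPrimitiveRoot.orderOf β
  have hn : 0 < n := hford.orderOf_pos
  have hβ0 : β ≠ 0 := by
    intro h; rw [h] at hβN; simp [zero_pow hN.ne'] at hβN
  have hne1 : β ≠ 1 := fun h => evalP_one k hk (h ▸ hroot)
  have hnene : β ≠ -1 := fun h => evalP_negone k (h ▸ hroot)
  have hsqne : β^2 ≠ -1 := fun h => evalP_i k β h hroot
  -- the complex relation
  have hH : β^(4*k+1) * (β^3 - β^2 - β - 1) + (β^3 + β^2 + β - 1) = 0 := by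
    have := congrArg (Polynomial.aeval β) (keyA k)
    simp only [map_mul, hroot, mul_zero, Hk, map_add, map_pow, map_sub, map_one, aeval_X] at this
    linear_combination -this
  set M := 4*k+1 with hM_def
  have hModd : M % 2 = 1 := by omega
  -- divisibility over ℤ and mod 2
  have hdvdZ : cyclotomic n ℤ ∣ Pm1 k := by
    rw [cyclotomic_eq_minpoly hprim hn]
    exact minpoly.isIntegrallyClosed_dvd (hprim.isIntegral hn) hroot
  have hdvd2 : cyclotomic n (ZMod 2) ∣ (X - 1)^3 * (X ^ M + 1) := by
    have h1 : cyclotomic n ℤ ∣ Hk k := by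
      rw [← keyA k]; exact Dvd.dvd.mul_left hdvdZ _
    have h2 := Polynomial.map_dvd (Int.castRingHom (ZMod 2)) h1
    rwa [map_cyclotomic, keyB] at h2
  -- squarefreeness of X^M + 1 over ZMod 2
  have hXM : (X ^ M + 1 : (ZMod 2)[X]) = X ^ M - 1 := by
    have h1 : (-1 : (ZMod 2)[X]) = 1 := by
      rw [← map_one (C : ZMod 2 →+* (ZMod 2)[X]), ← map_neg, show (-1 : ZMod 2) = 1 by decide]
    rw [sub_eq_add_neg, h1]
  have hsf : Squarefree (X ^ M + 1 : (ZMod 2)[X]) := by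
    rw [hXM]
    have : (X ^ M - 1 : (ZMod 2)[X]) = X ^ M - C 1 := by simp
    rw [this]
    exact (Polynomial.separable_X_pow_sub_C (1 : ZMod 2)
      (by
        rw [show ((M : ZMod 2)) = 1 by
          rw [show M = 2*(2*k)+1 by omega]; push_cast; simp [show (2:ZMod 2)=0 by decide]]
        norm_num)
      one_ne_zero).squarefree

  -- decomposition n = 2^e * m
  obtain ⟨e, m, hfact, hmodd⟩ : ∃ e m, 2^e * m = n ∧ ¬ 2 ∣ m :=
    ⟨_, _, Nat.ordProj_mul_ordCompl_eq_self n 2, Nat.not_dvd_ordCompl Nat.prime_two hn.ne'⟩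
  have hmpos : 0 < m := by
    rcases Nat.eq_zero_or_pos m with h | h
    · rw [h, mul_zero] at hfact; omega
    · exact h
  have hn1 : n ≠ 1 := by
    intro h
    apply hne1
    have := hprim.pow_eq_one
    rwa [h, pow_one] at this
  rcases Nat.eq_zero_or_pos e with he | he
  · -- n odd
    have hmn : m = n := by rw [he] at hfact; simpa using hfact
    rw [hmn] at hmodd
    have hm2 : 2 ≤ n := by omega
    have hndvd : n ∣ M := dvd_of_cyclotomic_dvd hm2 hmodd hdvd2
    have hβM : β ^ M = 1 := (hprim.pow_eq_one_iff_dvd M).mpr hndvd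
    rw [hβM, one_mul] at hH
    have hb3 : β^3 = 1 := by linear_combination hH / 2
    have hq : β^2 + β + 1 = 0 := by
      have hfac : (β - 1) * (β^2 + β + 1) = 0 := by linear_combination hb3
      rcases mul_eq_zero.mp hfac with h | h
      · exact absurd (sub_eq_zero.mp h) hne1
      · exact h
    refine ⟨hq, ?_⟩
    have hdvd3 : n ∣ 3 := by rw [hn_def]; exact orderOf_dvd_of_pow_eq_one hb3
    have hle := Nat.le_of_dvd (by norm_num) hdvd3
    have h3 : n = 3 := by interval_cases n <;> omega
    obtain ⟨t, ht⟩ := hndvd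
    rw [h3] at ht
    omega
  · exfalso
    haveI : Fact (Nat.Prime 2) := ⟨Nat.prime_two⟩
    have hcyc : cyclotomic n (ZMod 2) = cyclotomic m (ZMod 2) ^ (2^e - 2^(e-1)) := by
      rw [← hfact]
      exact cyclotomic_mul_prime_pow_eq (ZMod 2) hmodd he
    have h2e : 2^e = 2 * 2^(e-1) := by
      rw [← pow_succ']
      congr 1
      omega
    have hdvd2' := hdvd2
    rw [hcyc] at hdvd2'
    have hβn : β ^ n = 1 := hprim.pow_eq_one
    rcases Nat.lt_or_ge m 2 with hm1 | hm2
    · -- m = 1, n = 2^e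
      have hm1' : m = 1 := by omega
      rw [hm1', cyclotomic_one] at hdvd2'
      have hSne : ¬ (X - 1 : (ZMod 2)[X]) ∣ (∑ i ∈ Finset.range M, X ^ i) := by
        rw [show (X - 1 : (ZMod 2)[X]) = X - C 1 by rw [map_one], dvd_iff_isRoot]
        intro h
        simp only [IsRoot.def, eval_finset_sum, eval_pow, eval_X, one_pow] at h
        rw [Finset.sum_const, Finset.card_range, nsmul_eq_mul, mul_one] at h
        have hM2 : (M : ZMod 2) = 1 := by
          rw [← ZMod.natCast_mod M 2, hModd, Nat.cast_one]
        rw [hM2] at h; exact one_ne_zero h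
      have hfactD : (X - 1 : (ZMod 2)[X])^3 * (X ^ M + 1)
          = (X-1)^4 * (∑ i ∈ Finset.range M, X ^ i) := by
        rw [hXM, ← geom_sum_mul]
        ring
      have hsle : 2^e - 2^(e-1) ≤ 4 := by
        by_contra hgt
        push_neg at hgt
        have h5 : (X - 1 : (ZMod 2)[X])^4 * (X - 1) ∣ (X-1)^4 * (∑ i ∈ Finset.range M, X ^ i) := by
          rw [← pow_succ, ← hfactD]
          exact dvd_trans (pow_dvd_pow _ (by omega)) hdvd2'
        have hXne : ((X : (ZMod 2)[X]) - 1)^4 ≠ 0 := pow_ne_zero _ (by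
          rw [show (X - 1 : (ZMod 2)[X]) = X - C 1 by rw [map_one]]
          exact X_sub_C_ne_zero 1)
        exact hSne ((mul_dvd_mul_iff_left hXne).mp h5)
      have he3 : e ≤ 3 := by
        by_contra hgt
        have : 2^3 ≤ 2^(e-1) := Nat.pow_le_pow_right (by norm_num) (by omega)
        omega
      have hne : n = 2^e := by rw [← hfact, hm1', mul_one]
      interval_cases e
      · -- n = 2
        rw [hne] at hβn; norm_num at hβn
        rcases hβn with h | h
        · exact hne1 h
        · exact hnene h
      · -- n = 4
        rw [hne] at hβn; norm_num at hβn
        have h2 : (β^2 - 1) * (β^2 + 1) = 0 := by linear_combination hβn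
        rcases mul_eq_zero.mp h2 with h | h
        · have hdd : n ∣ 2 := by
            rw [hn_def]; exact orderOf_dvd_of_pow_eq_one (by linear_combination h)
          have := Nat.le_of_dvd (by norm_num) hdd
          omega
        · exact hsqne (by linear_combination h)
      · -- n = 8
        rw [hne] at hβn; norm_num at hβn
        have h4 : (β^4 - 1) * (β^4 + 1) = 0 := by linear_combination hβn
        have hb4 : β^4 = -1 := by
          rcases mul_eq_zero.mp h4 with h | h
          · exfalso
            have hdd : n ∣ 4 := by
              rw [hn_def]; exact orderOf_dvd_of_pow_eq_one (by linear_combination h)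
            have := Nat.le_of_dvd (by norm_num) hdd
            omega
          · linear_combination h
        have hMeq : β ^ M = (-1)^k * β := by
          rw [hM_def, pow_succ, pow_mul, hb4]
        rcases Nat.even_or_odd k with hke | hko
        · rw [hMeq, hke.neg_one_pow, one_mul] at hH
          have : (2:ℂ) = 0 := by linear_combination hb4 - hH
          norm_num at this
        · rw [hMeq, hko.neg_one_pow] at hH
          have hz : β * (β^2 + β + 1) = 0 := by linear_combination hH/2 + hb4/2
          have hq : β^2 + β + 1 = 0 := by
            rcases mul_eq_zero.mp hz with h | h
            · exact absurd h hβ0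
            · exact h
          have hb3 : β^3 = 1 := by linear_combination (β - 1) * hq
          have hdd : n ∣ 3 := by rw [hn_def]; exact orderOf_dvd_of_pow_eq_one hb3
          have := Nat.le_of_dvd (by norm_num) hdd
          omega
    · -- m ≥ 2
      have hnd : ¬ (X - 1 : (ZMod 2)[X]) ∣ cyclotomic m (ZMod 2) := by
        intro hdv
        haveI : NeZero ((m : ZMod 2)) := NeZero.of_not_dvd _ hmodd
        have hroot1 : IsRoot (cyclotomic m (ZMod 2)) 1 := by
          rw [← dvd_iff_isRoot]
          rwa [map_one]
        have hp1 : IsPrimitiveRoot (1 : ZMod 2) m := isRoot_cyclotomic_iff.mp hroot1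
        have := Nat.le_of_dvd one_pos (hp1.dvd_of_pow_eq_one 1 (one_pow 1))
        omega
      have hirr : Irreducible (X - 1 : (ZMod 2)[X]) := by
        rw [show (X - 1 : (ZMod 2)[X]) = X - C 1 by rw [map_one]]
        exact irreducible_X_sub_C 1
      have hco : IsCoprime (cyclotomic m (ZMod 2) ^ (2^e - 2^(e-1))) ((X - 1 : (ZMod 2)[X])^3) :=
        IsCoprime.pow ((hirr.coprime_iff_not_dvd.mpr hnd).symm)
      have hdvdM : cyclotomic m (ZMod 2) ^ (2^e - 2^(e-1)) ∣ X ^ M + 1 :=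
        hco.dvd_of_dvd_mul_left hdvd2'
      rcases Nat.lt_or_ge e 2 with he1 | he2
      · -- e = 1
        have he1' : e = 1 := by omega
        have hmdvd : m ∣ M := by
          apply dvd_of_cyclotomic_dvd hm2 hmodd
          refine dvd_trans (dvd_trans (dvd_pow_self _ ?_) hdvdM) (dvd_mul_left _ _)
          have := Nat.two_pow_pos (e-1)
          omega
        have h2M : β ^ (2*M) = 1 := by
          refine (hprim.pow_eq_one_iff_dvd (2*M)).mpr ?_
          rw [← hfact, he1', pow_one]
          exact mul_dvd_mul_left 2 hmdvd
        have hsq : (β^M)^2 = 1 := by rw [← pow_mul, mul_comm]; exact h2M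
        have hMne1 : β ^ M ≠ 1 := by
          intro h
          have hdd : n ∣ M := (hprim.pow_eq_one_iff_dvd M).mp h
          have h2dd : 2 ∣ M := dvd_trans (by rw [← hfact, he1', pow_one]; exact Dvd.intro m rfl) hdd
          omega
        have hMeqneg : β ^ M = -1 := by
          have hfac : (β^M - 1)*(β^M + 1) = 0 := by linear_combination hsq
          rcases mul_eq_zero.mp hfac with h | h
          · exact absurd (by linear_combination h) hMne1
          · linear_combination h
        rw [hMeqneg] at hH
        have hz : β * (β + 1) = 0 := by linear_combination hH/2
        rcases mul_eq_zero.mp hz with h | h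
        · exact hβ0 h
        · exact hnene (by linear_combination h)
      · -- e ≥ 2
        have hs2 : 2 ≤ 2^e - 2^(e-1) := by
          have : 2^1 ≤ 2^(e-1) := Nat.pow_le_pow_right (by norm_num) (by omega)
          omega
        have hcc : cyclotomic m (ZMod 2) * cyclotomic m (ZMod 2) ∣ X ^ M + 1 := by
          refine dvd_trans ?_ hdvdM
          rw [← sq]
          exact pow_dvd_pow _ hs2
        have hu : IsUnit (cyclotomic m (ZMod 2)) := hsf _ hcc
        have hdeg := Polynomial.natDegree_eq_zero_of_isUnit hu
        rw [natDegree_cyclotomic] at hdeg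
        have := Nat.totient_pos.mpr hmpos
        omega


lemma eval_cube_root (k : ℕ) (hk3 : k % 3 = 2) (γ : ℂ) (hγ : γ^2 + γ + 1 = 0) :
    Polynomial.aeval γ (Pm1 k) = 0 := by
  have hγ3 : γ^3 = 1 := by linear_combination (γ - 1) * hγ
  have hγne1 : γ ≠ 1 := by
    intro h; rw [h] at hγ; norm_num at hγ
  have hA := congrArg (Polynomial.aeval γ) (keyA k)
  simp only [map_mul, Hk, map_add, map_pow, map_sub, map_one, aeval_X] at hA
  obtain ⟨j, hj⟩ : ∃ j, k = 3*j + 2 := ⟨k/3, by omega⟩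
  have hpow : γ^(4*k+1) = 1 := by
    rw [show 4*k+1 = 3*(4*j+3) by omega, pow_mul, hγ3, one_pow]
  rw [hpow, one_mul] at hA
  have h40 : γ^4 - 1 ≠ 0 := by
    intro h
    apply hγne1
    have h4 : γ^4 = 1 := by linear_combination h
    linear_combination h4 - γ * hγ3
  have h0 : (γ^4 - 1) * Polynomial.aeval γ (Pm1 k) = 0 := by
    rw [hA]; linear_combination 2 * hγ3
  exact (mul_eq_zero.mp h0).resolve_left h40

/-- For every `k ≥ 1`: if `k ≢ 2 (mod 3)`, no complex root of `P_{k-1}`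
is a root of unity; if `k ≡ 2 (mod 3)`, the only complex roots of `P_{k-1}` that are roots
of unity are the two primitive cube roots of unity `e^{±2πi/3}`. -/
theorem stmt_10 (k : ℕ) (hk : 1 ≤ k) :
    (k % 3 ≠ 2 → ∀ β : ℂ, Polynomial.aeval β (Pm1 k) = 0 →
      ¬ ∃ N : ℕ, 0 < N ∧ β ^ N = 1) ∧
    (k % 3 = 2 →
      Polynomial.aeval (Complex.exp (2 * Real.pi * Complex.I / 3)) (Pm1 k) = 0 ∧
      Polynomial.aeval (Complex.exp (-(2 * Real.pi * Complex.I) / 3)) (Pm1 k) = 0 ∧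
      ∀ β : ℂ, Polynomial.aeval β (Pm1 k) = 0 → (∃ N : ℕ, 0 < N ∧ β ^ N = 1) →
        β = Complex.exp (2 * Real.pi * Complex.I / 3) ∨
        β = Complex.exp (-(2 * Real.pi * Complex.I) / 3)) := by
  have hω3 : (Complex.exp (2 * Real.pi * Complex.I / 3))^3 = 1 := by
    rw [← Complex.exp_nat_mul, show ((3:ℕ):ℂ) * (2 * Real.pi * Complex.I / 3)
      = 2 * Real.pi * Complex.I by push_cast; ring, Complex.exp_two_pi_mul_I]
  have hω'3 : (Complex.exp (-(2 * Real.pi * Complex.I) / 3))^3 = 1 := by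
    rw [← Complex.exp_nat_mul, show ((3:ℕ):ℂ) * (-(2 * Real.pi * Complex.I) / 3)
      = -(2 * Real.pi * Complex.I) by push_cast; ring, Complex.exp_neg,
      Complex.exp_two_pi_mul_I, inv_one]
  have hsin : Real.sin (2 * Real.pi / 3) ≠ 0 := by
    have := Real.pi_pos
    have h1 : (0:ℝ) < 2 * Real.pi / 3 := by linarith
    have h2 : 2 * Real.pi / 3 < Real.pi := by linarith
    exact (Real.sin_pos_of_pos_of_lt_pi h1 h2).ne'
  have hωne1 : Complex.exp (2 * Real.pi * Complex.I / 3) ≠ 1 := by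
    intro h
    have him := congrArg Complex.im h
    rw [show 2 * Real.pi * Complex.I / 3 = ((2 * Real.pi / 3 : ℝ):ℂ) * Complex.I by
      push_cast; ring, Complex.exp_ofReal_mul_I_im] at him
    simp at him
    exact hsin him
  have hω'ne1 : Complex.exp (-(2 * Real.pi * Complex.I) / 3) ≠ 1 := by
    intro h
    have him := congrArg Complex.im h
    rw [show -(2 * Real.pi * Complex.I) / 3 = ((-(2 * Real.pi / 3) : ℝ):ℂ) * Complex.I by
      push_cast; ring, Complex.exp_ofReal_mul_I_im, Real.sin_neg] at him
    simp at him
    exact hsin him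
  have hωq : (Complex.exp (2 * Real.pi * Complex.I / 3))^2
      + Complex.exp (2 * Real.pi * Complex.I / 3) + 1 = 0 := by
    have hfac : (Complex.exp (2 * Real.pi * Complex.I / 3) - 1)
        * ((Complex.exp (2 * Real.pi * Complex.I / 3))^2
          + Complex.exp (2 * Real.pi * Complex.I / 3) + 1) = 0 := by
      linear_combination hω3
    exact (mul_eq_zero.mp hfac).resolve_left (sub_ne_zero.mpr hωne1)
  have hω'q : (Complex.exp (-(2 * Real.pi * Complex.I) / 3))^2
      + Complex.exp (-(2 * Real.pi * Complex.I) / 3) + 1 = 0 := by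
    have hfac : (Complex.exp (-(2 * Real.pi * Complex.I) / 3) - 1)
        * ((Complex.exp (-(2 * Real.pi * Complex.I) / 3))^2
          + Complex.exp (-(2 * Real.pi * Complex.I) / 3) + 1) = 0 := by
      linear_combination hω'3
    exact (mul_eq_zero.mp hfac).resolve_left (sub_ne_zero.mpr hω'ne1)
  constructor
  · intro hk3 β hroot hfin
    exact hk3 (core k hk β hroot hfin).2
  · intro hk3
    refine ⟨eval_cube_root k hk3 _ hωq, eval_cube_root k hk3 _ hω'q, ?_⟩
    intro β hroot hfin
    have hβq := (core k hk β hroot hfin).1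
    have hωω' : Complex.exp (2 * Real.pi * Complex.I / 3)
        * Complex.exp (-(2 * Real.pi * Complex.I) / 3) = 1 := by
      rw [← Complex.exp_add, show 2 * Real.pi * Complex.I / 3 + -(2 * Real.pi * Complex.I) / 3
        = 0 by ring, Complex.exp_zero]
    have hsum : Complex.exp (2 * Real.pi * Complex.I / 3)
        + Complex.exp (-(2 * Real.pi * Complex.I) / 3) = -1 := by
      have hω'eq : Complex.exp (-(2 * Real.pi * Complex.I) / 3)
          = (Complex.exp (2 * Real.pi * Complex.I / 3))^2 := by
        linear_combination (Complex.exp (2 * Real.pi * Complex.I / 3))^2 * hωω'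
          - Complex.exp (-(2 * Real.pi * Complex.I) / 3) * hω3
      rw [hω'eq]; linear_combination hωq
    have hfac : (β - Complex.exp (2 * Real.pi * Complex.I / 3))
        * (β - Complex.exp (-(2 * Real.pi * Complex.I) / 3)) = 0 := by
      linear_combination hβq - β * hsum + hωω'
    rcases mul_eq_zero.mp hfac with h | h
    · left; exact sub_eq_zero.mp h
    · right; exact sub_eq_zero.mp h
end

section
/- For every k ≥ 1, the polynomial p_{k-1} satisfies p_{k-1}(0) = (−1)^k (2k+1) and p'_{k-1}(0) = (−1)^k k, where p'_{k-1} denotes the formal derivative. -/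
open Polynomial

lemma pp_key : ∀ n : ℕ,
    Polynomial.eval (0 : ℤ) (pp n) = (-1) ^ (n + 1) * (2 * (n : ℤ) + 3) ∧
    Polynomial.eval (0 : ℤ) (Polynomial.derivative (pp n)) = (-1) ^ (n + 1) * ((n : ℤ) + 1)
  | 0 => by constructor <;> simp [pp]
  | 1 => by constructor <;> simp [pp] <;> ring_nf
  | (n + 2) => by
    obtain ⟨h1, h2⟩ := pp_key (n + 1)
    obtain ⟨h3, h4⟩ := pp_key n
    constructor
    · show Polynomial.eval (0 : ℤ) ((X ^ 2 - 2) * pp (n + 1) - pp n) = _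
      simp only [eval_sub, eval_mul, eval_pow, eval_X, eval_ofNat, h1, h3]
      push_cast
      ring
    · show Polynomial.eval (0 : ℤ) (Polynomial.derivative ((X ^ 2 - 2) * pp (n + 1) - pp n)) = _
      simp only [derivative_sub, derivative_mul, derivative_X_pow, derivative_ofNat,
        eval_sub, eval_add, eval_mul, eval_pow, eval_X, eval_ofNat, eval_zero, h1, h2, h3, h4]
      push_cast
      ring

/-- For every `k ≥ 1`, `p_{k-1}(0) = (−1)^k (2k+1)` and
`p′_{k-1}(0) = (−1)^k k`. -/
theorem stmt_12 (k : ℕ) (hk : 1 ≤ k) :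
    Polynomial.eval (0 : ℤ) (pp (k - 1)) = (-1) ^ k * (2 * (k : ℤ) + 1) ∧
    Polynomial.eval (0 : ℤ) (Polynomial.derivative (pp (k - 1))) = (-1) ^ k * (k : ℤ) := by
  obtain ⟨n, rfl⟩ : ∃ n, k = n + 1 := ⟨k - 1, (Nat.succ_pred_eq_of_pos hk).symm⟩
  obtain ⟨h1, h2⟩ := pp_key n
  simp only [Nat.add_sub_cancel]
  constructor <;> [rw [h1]; rw [h2]] <;> push_cast <;> ring
end

section
/- Fix k ≥ 1 and let p be a prime with p > 3 and p dividing 2k+1. Then every root of the reduction of P_{k-1} modulo p, in an algebraic closure of 𝔽_p, has multiplicity at most 4. -/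
open Polynomial

lemma Pm1_id (k : ℕ) : (X^4 - 1) * Pm1 k
    = (X^3 - X^2 - X - 1) * X^(4*k+1) + (X^3 + X^2 + X - 1) := by
  induction k with
  | zero => simp [Pm1]; ring
  | succ k ih =>
    have hs : Pm1 (k+1) = Pm1 k + (X^4 - X^3 - X^2 - X) * X^(4*k) := by
      rw [Pm1, Pm1, Finset.sum_range_succ]; ring
    have h1 : 4*(k+1)+1 = 4*k+1+4 := by ring
    rw [hs, mul_add, ih, h1, pow_add, pow_add]
    ring

/-- For `k ≥ 1` and a prime `p > 3` dividing `2k+1`, every root of the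
reduction of `P_{k-1}` mod `p` in an algebraic closure of `𝔽_p` has multiplicity at
most `4`. -/
theorem stmt_14 (k : ℕ) (hk : 1 ≤ k) (p : ℕ) [Fact p.Prime] (hp3 : 3 < p)
    (hdvd : p ∣ 2 * k + 1) :
    ∀ β : AlgebraicClosure (ZMod p),
      Polynomial.rootMultiplicity β
        ((Pm1 k).map (Int.castRingHom (AlgebraicClosure (ZMod p)))) ≤ 4 := by
  obtain ⟨j, rfl⟩ : ∃ j, k = 1 + j := ⟨k - 1, by omega⟩
  set K := AlgebraicClosure (ZMod p) with hK
  intro β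
  by_contra hcon
  push_neg at hcon
  set f : K[X] := (Pm1 (1+j)).map (Int.castRingHom K) with hf
  have hev0 : (Pm1 (1+j)).eval 0 = 1 := by
    simp [Pm1, eval_finset_sum]
  have hfev0 : f.eval 0 = 1 := by
    rw [hf, eval_map, eval₂_at_zero]
    simp [coeff_zero_eq_eval_zero, hev0]
  have hfne : f ≠ 0 := fun h => by simp [h] at hfev0
  have hβroot : f.IsRoot β := by
    rw [← rootMultiplicity_pos hfne]; omega
  have hβ : β ≠ 0 := by
    rintro rfl
    rw [IsRoot, hfev0] at hβroot
    exact one_ne_zero hβroot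
  have hXne : (X^4 - 1 : K[X]) ≠ 0 := by
    simpa using X_pow_sub_C_ne_zero (by norm_num : 0 < 4) (1 : K)
  have hFne : (X^4 - 1) * f ≠ 0 := mul_ne_zero hXne hfne
  have hmult : 4 < ((X^4 - 1) * f).rootMultiplicity β := by
    rw [rootMultiplicity_mul hFne]
    omega
  have h4 : (derivative^[4] ((X^4 - 1) * f)).IsRoot β :=
    isRoot_iterate_derivative_of_lt_rootMultiplicity hmult
  have hFid : (X^4 - 1) * f
      = (X^3 - X^2 - X - 1) * X^(4*(1+j)+1) + (X^3 + X^2 + X - 1) := by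
    have := congrArg (Polynomial.map (Int.castRingHom K)) (Pm1_id (1+j))
    simpa using this
  have hF2 : (X^4 - 1) * f = X^(4*j+8) - X^(4*j+7) - X^(4*j+6) - X^(4*j+5)
      - (1 - X - X^2 - X^3) := by
    rw [hFid, show 4*(1+j)+1 = 4*j+5 from by ring]
    rw [show 4*j+8 = 4*j+5+3 from by ring, show 4*j+7 = 4*j+5+2 from by ring,
      show 4*j+6 = 4*j+5+1 from by ring, pow_add, pow_add, pow_add]
    ring
  rw [hF2] at h4
  have hB : derivative^[4] (1 - X - X^2 - (X:K[X])^3) = 0 :=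
    iterate_derivative_eq_zero (Nat.lt_succ_of_le (by compute_degree!))
  simp only [iterate_derivative_sub, hB, sub_zero,
    iterate_derivative_X_pow_eq_C_mul] at h4
  rw [IsRoot] at h4
  simp only [eval_sub, eval_mul, eval_C, eval_pow, eval_X] at h4
  rw [show 4*j+8-4 = 4*j+4 from by omega, show 4*j+7-4 = 4*j+3 from by omega,
    show 4*j+6-4 = 4*j+2 from by omega, show 4*j+5-4 = 4*j+1 from by omega] at h4
  -- characteristic facts
  have hchar : CharP K p := inferInstanceAs (CharP (AlgebraicClosure (ZMod p)) p)
  have h24 : (24 : K) ≠ 0 := by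
    rw [show (24:K) = ((24:ℕ):K) from by norm_num, Ne, CharP.cast_eq_zero_iff K p 24]
    intro h
    have hp := Fact.out (p := p.Prime)
    rcases (Nat.Prime.dvd_mul hp).mp (show p ∣ 8 * 3 from by norm_num at h ⊢; exact h) with h' | h'
    · have := Nat.le_of_dvd (by norm_num) (hp.dvd_of_dvd_pow (show p ∣ 2^3 from by norm_num at h' ⊢; exact h'))
      omega
    · have := Nat.le_of_dvd (by norm_num) h'
      omega
  have h0 : ((2*(1+j)+1 : ℕ) : K) = 0 := by
    have h0' : ((2*(1+j)+1 : ℕ) : ZMod p) = 0 :=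
      (ZMod.natCast_eq_zero_iff _ _).mpr hdvd
    rw [← map_natCast (algebraMap (ZMod p) K), h0', map_zero]
  push_cast [K] at h0
  -- descFactorial values
  have edf : ∀ m : ℕ, (m+4).descFactorial 4 = (m+1)*(m+2)*(m+3)*(m+4) := by
    intro m
    simp only [Nat.descFactorial, Nat.descFactorial_zero, mul_one, Nat.sub_zero,
      show m+4-1 = m+3 from by omega, show m+4-2 = m+2 from by omega,
      show m+4-3 = m+1 from by omega]
    ring
  have e1 : ((4*j+8).descFactorial 4 : K) = 0 := by
    rw [show 4*j+8 = (4*j+4)+4 from by omega, edf]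
    push_cast [K]
    linear_combination (2*(4*(j:K)+5)*(4*(j:K)+7)*(4*(j:K)+8)) * h0
  have e2 : ((4*j+7).descFactorial 4 : K) = 0 := by
    rw [show 4*j+7 = (4*j+3)+4 from by omega, edf]
    push_cast [K]
    linear_combination (2*(4*(j:K)+4)*(4*(j:K)+5)*(4*(j:K)+7)) * h0
  have e3 : ((4*j+6).descFactorial 4 : K) = 0 := by
    rw [show 4*j+6 = (4*j+2)+4 from by omega, edf]
    push_cast [K]
    linear_combination (2*(4*(j:K)+3)*(4*(j:K)+4)*(4*(j:K)+5)) * h0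
  have e4 : ((4*j+5).descFactorial 4 : K) = 24 := by
    rw [show 4*j+5 = (4*j+1)+4 from by omega, edf]
    push_cast [K]
    linear_combination (2*(4*(j:K)+1)*(16*(j:K)^2+28*(j:K)+16)) * h0
  rw [e1, e2, e3, e4] at h4
  have hfin : (24 : K) * β ^ (4*j+1) = 0 := by linear_combination -h4
  rcases mul_eq_zero.mp hfin with h | h
  · exact h24 h
  · exact pow_ne_zero _ hβ h
end

section
/- Let p be a prime number and let α be a nonzero element of an algebraic closure of 𝔽_p = ℤ/pℤ. Then α + α^{−1} lies in (the image of) 𝔽_p if and only if α^{p−1} = 1 or α^{p+1} = 1. -/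
open Polynomial

lemma key_lemma (p : ℕ) [Fact p.Prime] {K : Type*} [Field K] [Algebra (ZMod p) K]
    (x : K) (hx : x ^ p = x) : ∃ a : ZMod p, x = algebraMap (ZMod p) K a := by
  classical
  have hroots : roots (X ^ p - X : (ZMod p)[X]) = Finset.univ.val := by
    have := FiniteField.roots_X_pow_card_sub_X (ZMod p)
    rwa [ZMod.card p] at this
  have haeval : aeval x (X ^ p - X : (ZMod p)[X]) = 0 := by
    simp [hx]
  have hsplits : Splits (X ^ p - X : (ZMod p)[X]) := by
    rw [splits_iff_card_roots, hroots]
    have h1 : (1:ℕ) < p := (Fact.out : p.Prime).one_lt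
    have hdeg : (X ^ p - X : (ZMod p)[X]).natDegree = p := by
      compute_degree!
      · rw [if_neg (Nat.ne_of_lt h1)]; simp
      · omega
    rw [hdeg, ← Finset.card_def, Finset.card_univ, ZMod.card p]
  have h1 : (1:ℕ) < p := (Fact.out : p.Prime).one_lt
  have hmonic : (X ^ p - X : (ZMod p)[X]).Monic :=
    monic_X_pow_sub (by rw [degree_X]; exact_mod_cast h1)
  have hfact := hsplits.eq_prod_roots_of_monic hmonic
  rw [hroots] at hfact
  rw [hfact] at haeval
  rw [map_multiset_prod, Multiset.map_map] at haeval
  have hmem := Multiset.prod_eq_zero_iff.mp haeval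
  obtain ⟨a, -, ha⟩ := Multiset.mem_map.mp hmem
  refine ⟨a, ?_⟩
  simp only [Function.comp_apply, map_sub, aeval_X, aeval_C] at ha
  linear_combination ha

/-- For a prime `p` and a nonzero `α` in an algebraic closure of `𝔽_p`,
`α + α⁻¹` lies in (the image of) `𝔽_p` iff `α^{p−1} = 1` or `α^{p+1} = 1`. -/
theorem stmt_15 (p : ℕ) [Fact p.Prime] (α : AlgebraicClosure (ZMod p)) (hα : α ≠ 0) :
    (∃ a : ZMod p, α + α⁻¹ = algebraMap (ZMod p) (AlgebraicClosure (ZMod p)) a) ↔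
      α ^ (p - 1) = 1 ∨ α ^ (p + 1) = 1 := by
  have hp1 : (1:ℕ) < p := (Fact.out : p.Prime).one_lt
  haveI : CharP (AlgebraicClosure (ZMod p)) p :=
    charP_of_injective_algebraMap (algebraMap (ZMod p) (AlgebraicClosure (ZMod p))).injective p
  have hαp : α ^ p ≠ 0 := pow_ne_zero _ hα
  have hu : α * α⁻¹ = 1 := mul_inv_cancel₀ hα
  have hv : α ^ p * (α ^ p)⁻¹ = 1 := mul_inv_cancel₀ hαp
  have hfrob : (α + α⁻¹) ^ p = α ^ p + (α ^ p)⁻¹ := by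
    rw [add_pow_char, inv_pow]
  have hsplit : (α + α⁻¹) ^ p = α + α⁻¹ ↔ α ^ (p - 1) = 1 ∨ α ^ (p + 1) = 1 := by
    rw [hfrob]
    constructor
    · intro h
      have h2 : (α ^ p - α) * (α ^ p * α - 1) = 0 := by
        linear_combination (α ^ p * α) * h - α * hv + (α ^ p) * hu
      rcases mul_eq_zero.mp h2 with h4 | h4
      · left
        have h5 : α ^ (p - 1) * α = 1 * α := by
          rw [← pow_succ, Nat.sub_add_cancel hp1.le, one_mul, sub_eq_zero.mp h4]
        exact mul_right_cancel₀ hα h5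
      · right
        rw [pow_succ]
        linear_combination h4
    · rintro (h | h)
      · have hap : α ^ p = α := by
          calc α ^ p = α ^ (p - 1) * α := by rw [← pow_succ, Nat.sub_add_cancel hp1.le]
          _ = α := by rw [h, one_mul]
        rw [hap]
      · have hap : α ^ p = α⁻¹ := by
          refine eq_inv_of_mul_eq_one_left ?_
          rw [← pow_succ]; exact h
        rw [hap, inv_inv, add_comm]
  rw [← hsplit]
  constructor
  · rintro ⟨a, ha⟩
    rw [ha, ← map_pow, ZMod.pow_card]
  · intro h
    exact key_lemma p _ h
end

section
/- Fix k ≥ 2 such that p := 2k+1 is a prime with p ≠ 3, and let Q_{k-1}(q) = P_{k-1}(q)·(q^4 − 1). Working in 𝔽_p[q] with the reductions of these polynomials modulo p: (1) gcd(q^{p−1} − 1, Q_{k-1}(q)) divides q^4 − 1; and (2) gcd(q^{p+1} − 1, Q_{k-1}(q)) divides (q^4 − 1)(q^3 − 1). -/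
open Polynomial

/-- `Q_{k-1}(q) = P_{k-1}(q)·(q⁴ − 1)`; here `Qm1 k` denotes `Q_{k-1}`. -/
noncomputable def Qm1 (k : ℕ) : Polynomial ℤ := Pm1 k * (X ^ 4 - 1)

/-- Closed form: `Q_{k-1} = (X⁴−1) + (X⁴−X³−X²−X)(X^{4k}−1)`. -/
lemma Qm1_eq (k : ℕ) :
    Qm1 k = (X ^ 4 - 1) + (X ^ 4 - X ^ 3 - X ^ 2 - X) * (X ^ (4 * k) - 1) := by
  have h : (∑ l ∈ Finset.range k, (X : Polynomial ℤ) ^ (4 * l)) * (X ^ 4 - 1)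
      = X ^ (4 * k) - 1 := by
    have := geom_sum_mul (X ^ 4 : Polynomial ℤ) k
    simpa [← pow_mul, mul_comm] using this
  rw [Qm1, Pm1, ← Finset.mul_sum, add_mul, one_mul, mul_assoc, h]

/-- For `k ≥ 2` with `p := 2k+1` prime, `p ≠ 3`, working in `𝔽_p[q]`:
(1) `gcd(q^{p−1} − 1, Q_{k-1}) ∣ q⁴ − 1`; (2) `gcd(q^{p+1} − 1, Q_{k-1}) ∣ (q⁴−1)(q³−1)`. -/
theorem stmt_16 (k : ℕ) (hk : 2 ≤ k) [hp : Fact (Nat.Prime (2 * k + 1))]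
    (hne : 2 * k + 1 ≠ 3) :
    (EuclideanDomain.gcd (X ^ (2 * k + 1 - 1) - 1)
        ((Qm1 k).map (Int.castRingHom (ZMod (2 * k + 1)))) ∣
      (X ^ 4 - 1 : Polynomial (ZMod (2 * k + 1)))) ∧
    (EuclideanDomain.gcd (X ^ (2 * k + 1 + 1) - 1)
        ((Qm1 k).map (Int.castRingHom (ZMod (2 * k + 1)))) ∣
      ((X ^ 4 - 1) * (X ^ 3 - 1) : Polynomial (ZMod (2 * k + 1)))) := by
  set R := Polynomial (ZMod (2 * k + 1))
  have hQ : (Qm1 k).map (Int.castRingHom (ZMod (2 * k + 1)))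
      = (X ^ 4 - 1) + (X ^ 4 - X ^ 3 - X ^ 2 - X) * (X ^ (4 * k) - 1) := by
    simp [Qm1_eq, Polynomial.map_add, Polynomial.map_mul, Polynomial.map_sub,
      Polynomial.map_pow, Polynomial.map_one, Polynomial.map_X]
  constructor
  · set d := EuclideanDomain.gcd (X ^ (2 * k + 1 - 1) - 1 : R)
      ((Qm1 k).map (Int.castRingHom (ZMod (2 * k + 1)))) with hd
    have h1 : d ∣ X ^ (2 * k + 1 - 1) - 1 := EuclideanDomain.gcd_dvd_left _ _
    have h2 : d ∣ (Qm1 k).map (Int.castRingHom (ZMod (2 * k + 1))) :=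
      EuclideanDomain.gcd_dvd_right _ _
    have hfac : (X ^ (4 * k) - 1 : R)
        = (X ^ (2 * k + 1 - 1) - 1) * (X ^ (2 * k) + 1) := by
      have : (X ^ (4 * k) : R) = (X ^ (2 * k)) ^ 2 := by
        rw [← pow_mul]; congr 1; ring
      simp only [Nat.add_sub_cancel, this]; ring
    have h3 : d ∣ (X ^ 4 - X ^ 3 - X ^ 2 - X : R) * (X ^ (4 * k) - 1) := by
      rw [hfac]
      exact Dvd.dvd.mul_left (h1.mul_right _) _
    have := dvd_sub h2 h3
    rwa [hQ, add_sub_cancel_right] at this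
  · set d := EuclideanDomain.gcd (X ^ (2 * k + 1 + 1) - 1 : R)
      ((Qm1 k).map (Int.castRingHom (ZMod (2 * k + 1)))) with hd
    have h1 : d ∣ X ^ (2 * k + 1 + 1) - 1 := EuclideanDomain.gcd_dvd_left _ _
    have h2 : d ∣ (Qm1 k).map (Int.castRingHom (ZMod (2 * k + 1))) :=
      EuclideanDomain.gcd_dvd_right _ _
    have key : (X : R) ^ 4 * ((Qm1 k).map (Int.castRingHom (ZMod (2 * k + 1))))
        = X * ((X ^ 4 - 1) * (X ^ 2 + X + 1))
          + (X ^ 4 - X ^ 3 - X ^ 2 - X) * ((X ^ (2 * k + 1 + 1) - 1) * (X ^ (2 * k + 1 + 1) + 1)) := by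
      rw [hQ]
      have hpow : ((X : R) ^ (2 * k + 1 + 1)) ^ 2 = X ^ 4 * X ^ (4 * k) := by
        rw [← pow_mul, ← pow_add]; congr 1; ring
      have : ((X : R) ^ (2 * k + 1 + 1) - 1) * (X ^ (2 * k + 1 + 1) + 1)
          = X ^ 4 * X ^ (4 * k) - 1 := by rw [← hpow]; ring
      rw [this]; ring
    have h3 : d ∣ (X : R) * ((X ^ 4 - 1) * (X ^ 2 + X + 1)) := by
      have hA : d ∣ (X : R) ^ 4 * ((Qm1 k).map (Int.castRingHom (ZMod (2 * k + 1)))) :=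
        h2.mul_left _
      have hB : d ∣ (X ^ 4 - X ^ 3 - X ^ 2 - X : R)
          * ((X ^ (2 * k + 1 + 1) - 1) * (X ^ (2 * k + 1 + 1) + 1)) :=
        ((h1.mul_right _).mul_left _)
      have := dvd_sub hA hB
      rwa [key, add_sub_cancel_right] at this
    have hcop : IsCoprime (X : R) (X ^ (2 * k + 1 + 1) - 1) :=
      ⟨X ^ (2 * k + 1), -1, by ring⟩
    have hcd : IsCoprime (X : R) d := hcop.of_isCoprime_of_dvd_right h1
    have h4 : d ∣ (X ^ 4 - 1 : R) * (X ^ 2 + X + 1) :=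
      (hcd.symm).dvd_of_dvd_mul_left h3
    exact h4.trans (mul_dvd_mul_left _ ⟨X - 1, by ring⟩)
end
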